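/- arXiv:1212.2319 — 9 statements merged into one kernel-verified Lean document; each statement's English description precedes it below -/
import Mathlib

section
/- Let K be a commutative ℚ-algebra and let t = (t₁, t₂, t₃, …) be a sequence in K. Then in the formal power series ring K⟦k⟧ one has the identity log(1 + Σ_{i≥1} t_i k^i) = Σ_{j≥1} h_j(t) k^j; equivalently, 1 + Σ_{i≥1} t_i k^i = exp(Σ_{j≥1} h_j(t) k^j), where for each j ≥ 1, h_j(t) = Σ_{‖α‖=j} (−1)^{|α|−1} (|α|−1)! · t^α / α!, the sum running over finitely supported multi-indices α = (α₁, α₂, …) of nonnegative integers with ‖α‖ := Σ_i i·α_i = j. -/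
open Finset

/-- `hpoly j t` is `h_j(t) = Σ_{‖α‖=j} (−1)^{|α|−1}(|α|−1)! t^α/α!`, the sum running over
finitely supported multi-indices `α = (α₁, α₂, …)` with `‖α‖ = Σ_i i·α_i = j`.
Any such multi-index satisfies `α_i ≤ j` and `α_i = 0` for `i > j`, so it is faithfully
encoded as a function `Fin j → ℕ` (index `i : Fin j` corresponding to `α_{i+1}`) with
values in `{0, …, j}`. Here `t : ℕ → K` with `t i` playing the role of `t_i` for `i ≥ 1`. -/
noncomputable def hpoly {K : Type*} [CommRing K] [Algebra ℚ K] (j : ℕ) (t : ℕ → K) : K :=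
  ∑ α ∈ (Fintype.piFinset fun _ : Fin j => Finset.range (j + 1)).filter
      (fun α => ∑ i, (i.1 + 1) * α i = j),
    ((-1 : ℚ) ^ ((∑ i, α i) - 1) * ((∑ i, α i) - 1).factorial / ∏ i, (α i).factorial) •
      ∏ i, t (i.1 + 1) ^ α i

namespace HpolyAux

open PowerSeries

lemma sum_Icc_one {M : Type*} [AddCommMonoid M] (j : ℕ) (f : ℕ → M) :
    ∑ n ∈ Icc 1 j, f n = ∑ i : Fin j, f (i + 1) := by
  induction j with
  | zero => simp
  | succ j ih =>
      rw [Finset.sum_Icc_succ_top (by omega), ih, Fin.sum_univ_castSucc]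
      simp

lemma prod_Icc_one {M : Type*} [CommMonoid M] (j : ℕ) (f : ℕ → M) :
    ∏ n ∈ Icc 1 j, f n = ∏ i : Fin j, f (i + 1) := by
  induction j with
  | zero => simp
  | succ j ih =>
      rw [Finset.prod_Icc_succ_top (by omega), ih, Fin.prod_univ_castSucc]
      simp

lemma sum_Icc_one_range {M : Type*} [AddCommMonoid M] (j : ℕ) (f : ℕ → M) :
    ∑ n ∈ Icc 1 j, f n = ∑ i ∈ range j, f (i + 1) :=
  (sum_Icc_one j f).trans (Fin.sum_univ_eq_sum_range (fun i => f (i + 1)) j)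

lemma coeff_mul_congr {R : Type*} [CommSemiring R] {A A' B B' : R⟦X⟧} {n : ℕ}
    (hA : ∀ i ≤ n, coeff i A = coeff i A') (hB : ∀ i ≤ n, coeff i B = coeff i B') :
    coeff n (A * B) = coeff n (A' * B') := by
  rw [coeff_mul, coeff_mul]
  refine Finset.sum_congr rfl fun p hp => ?_
  rw [Finset.HasAntidiagonal.mem_antidiagonal] at hp
  rw [hA p.1 (by omega), hB p.2 (by omega)]

lemma coeff_pow_congr {R : Type*} [CommSemiring R] {A B : R⟦X⟧} {n : ℕ}
    (h : ∀ i ≤ n, coeff i A = coeff i B) (m : ℕ) :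
    ∀ i ≤ n, coeff i (A ^ m) = coeff i (B ^ m) := by
  induction m with
  | zero => intro i _; rfl
  | succ m ih =>
      intro i hi
      rw [pow_succ, pow_succ]
      exact coeff_mul_congr (fun p hp => ih p (le_trans hp hi)) (fun p hp => h p (le_trans hp hi))

lemma coeff_pow_eq_zero {R : Type*} [CommSemiring R] {A : R⟦X⟧}
    (h : constantCoeff A = 0) {n m : ℕ} (hnm : n < m) :
    coeff n (A ^ m) = 0 :=
  X_pow_dvd_iff.mp (pow_dvd_pow_of_dvd (X_dvd_iff.mpr h) m) n hnm

lemma mul_nat_cancel {K : Type*} [CommRing K] [Algebra ℚ K] {x y : K} (n : ℕ)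
    (h : x * ((n : K) + 1) = y * ((n : K) + 1)) : x = y := by
  have halg : ((n : K) + 1) = algebraMap ℚ K ((n : ℚ) + 1) := by
    rw [map_add, map_one, map_natCast]
  have h2 : ((n : ℚ) + 1) • x = ((n : ℚ) + 1) • y := by
    rw [Algebra.smul_def, Algebra.smul_def, mul_comm, mul_comm (algebraMap ℚ K _), ← halg]
    exact h
  have hq : ((n : ℚ) + 1) ≠ 0 := by positivity
  have := congrArg (fun z => ((n : ℚ) + 1)⁻¹ • z) h2
  simpa [smul_smul, inv_mul_cancel₀ hq] using this

lemma ode_unique {K : Type*} [CommRing K] [Algebra ℚ K] {dG A B : K⟦X⟧}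
    (h0 : coeff 0 A = coeff 0 B)
    (hA : ∀ n, coeff (n + 1) A * ((n : K) + 1) = coeff n (A * dG))
    (hB : ∀ n, coeff (n + 1) B * ((n : K) + 1) = coeff n (B * dG)) :
    ∀ n, coeff n A = coeff n B := by
  intro n
  induction n using Nat.strong_induction_on with
  | _ n ih =>
    match n with
    | 0 => exact h0
    | n + 1 =>
      apply mul_nat_cancel n
      rw [hA n, hB n]
      exact coeff_mul_congr (fun i hi => ih i (by omega)) (fun _ _ => rfl)

variable {K : Type*} [CommRing K]

lemma monomial_eq_C_mul_X_pow (p : ℕ) (a : K) : monomial p a = C a * X ^ p := by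
  ext n
  simp [coeff_monomial, X_pow_eq, coeff_C_mul, mul_ite]

lemma mono_mul (p q : ℕ) (a b : K) :
    monomial p a * monomial q b = monomial (p + q) (a * b) := by
  rw [monomial_eq_C_mul_X_pow, monomial_eq_C_mul_X_pow, monomial_eq_C_mul_X_pow, map_mul, pow_add]
  ring

lemma prod_monomial (s : Finset ℕ) (d : ℕ → ℕ) (c : ℕ → K) :
    ∏ i ∈ s, monomial (d i) (c i) = monomial (∑ i ∈ s, d i) (∏ i ∈ s, c i) := by
  induction s using Finset.cons_induction with
  | empty => simp
  | cons a s ha ih => rw [prod_cons, ih, mono_mul, sum_cons, prod_cons]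

lemma mono_pow (p e : ℕ) (a : K) : (monomial p a) ^ e = monomial (p * e) (a ^ e) := by
  induction e with
  | zero => simp
  | succ e ih => rw [pow_succ, ih, mono_mul, pow_succ, Nat.mul_succ]

variable [Algebra ℚ K]

/-- `1 + Σ_{i ≥ 1} t_i X^i` minus the constant term. -/
noncomputable def uu (t : ℕ → K) : K⟦X⟧ := PowerSeries.mk fun n => if n = 0 then 0 else t n

/-- the coefficientwise logarithm of `1 + uu t`. -/
noncomputable def LL (t : ℕ → K) : K⟦X⟧ :=
  PowerSeries.mk fun j => ∑ m ∈ Icc 1 j, ((-1 : ℚ) ^ (m - 1) / m) • coeff j (uu t ^ m)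

lemma constantCoeff_uu (t : ℕ → K) : constantCoeff (uu t) = 0 := by
  rw [← coeff_zero_eq_constantCoeff_apply]
  simp [uu]

lemma coeff_LL (t : ℕ → K) (j : ℕ) (hj : 1 ≤ j) : coeff j (LL t) = hpoly j t := by
  classical
  set s : Finset ℕ := Icc 1 j with hs
  set w : K⟦X⟧ := ∑ i ∈ s, monomial i (t i) with hw
  have hcw : ∀ i ≤ j, coeff i (uu t) = coeff i w := by
    intro i hi
    rw [hw, map_sum]
    simp only [coeff_monomial]
    rw [Finset.sum_ite_eq s i t]
    rcases Nat.eq_zero_or_pos i with h0 | h1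
    · subst h0
      simp [uu, hs]
    · rw [if_pos (by rw [hs]; exact mem_Icc.mpr ⟨h1, hi⟩)]
      simp [uu, Nat.pos_iff_ne_zero.mp h1]
  have hpow : ∀ m, coeff j (uu t ^ m) = coeff j (w ^ m) :=
    fun m => coeff_pow_congr hcw m j le_rfl
  have hcoe : ∀ m, coeff j (w ^ m)
      = ∑ k ∈ (s.piAntidiag m).filter (fun k => ∑ i ∈ s, i * k i = j),
          (Nat.multinomial s k : K) * ∏ i ∈ s, t i ^ k i := by
    intro m
    rw [hw, sum_pow_eq_sum_piAntidiag, map_sum, Finset.sum_filter]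
    refine Finset.sum_congr rfl fun k hk => ?_
    have he : ∀ i ∈ s, (monomial i (t i)) ^ k i = monomial (i * k i) ((t i) ^ k i) :=
      fun i _ => mono_pow _ _ _
    rw [Finset.prod_congr rfl he, prod_monomial, ← nsmul_eq_mul, map_nsmul, coeff_monomial]
    by_cases hcond : ∑ i ∈ s, i * k i = j
    · rw [if_pos hcond.symm, if_pos hcond, nsmul_eq_mul]
    · rw [if_neg (fun h => hcond h.symm), if_neg hcond, smul_zero]
  have hmaps : ∀ α ∈ (Fintype.piFinset fun _ : Fin j => Finset.range (j + 1)).filter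
      (fun α => ∑ i, (i.1 + 1) * α i = j), (∑ i, α i) ∈ s := by
    intro α hα
    rw [mem_filter] at hα
    rw [hs, mem_Icc]
    refine ⟨?_, ?_⟩
    · by_contra h
      have hz : ∑ i, α i = 0 := by omega
      have h0 : ∀ i, α i = 0 := fun i =>
        Nat.le_zero.mp (hz ▸ Finset.single_le_sum
          (f := fun i => α i) (fun _ _ => Nat.zero_le _) (mem_univ i))
      have hzz : (∑ i : Fin j, (i.1 + 1) * α i) = 0 :=
        Finset.sum_eq_zero fun i _ => by rw [h0]; ring
      rw [hα.2] at hzz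
      omega
    · calc ∑ i, α i ≤ ∑ i : Fin j, (i.1 + 1) * α i :=
            Finset.sum_le_sum fun i _ => Nat.le_mul_of_pos_left _ (by omega)
        _ = j := hα.2
  rw [LL, coeff_mk, hpoly, ← Finset.sum_fiberwise_of_maps_to hmaps]
  refine Finset.sum_congr rfl fun m hm => ?_
  rw [hs, mem_Icc] at hm
  rw [hpow, hcoe, Finset.smul_sum]
  refine Finset.sum_nbij' (fun k => fun i : Fin j => k (i.1 + 1))
    (fun α => fun n => if h : 1 ≤ n ∧ n ≤ j then α ⟨n - 1, by omega⟩ else 0)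
    ?_ ?_ ?_ ?_ ?_
  · -- maps into
    intro k hk
    rw [mem_filter, mem_piAntidiag] at hk
    obtain ⟨⟨hsum, hsupp⟩, hwt⟩ := hk
    rw [hs, sum_Icc_one j k] at hsum
    rw [hs, sum_Icc_one j (fun n => n * k n)] at hwt
    rw [mem_filter, mem_filter, Fintype.mem_piFinset]
    refine ⟨⟨fun i => ?_, hwt⟩, hsum⟩
    rw [Finset.mem_range]
    have hle : k (i.1 + 1) ≤ ∑ i : Fin j, k (i.1 + 1) := by
      rw [← sum_Icc_one j k]
      exact Finset.single_le_sum (fun _ _ => Nat.zero_le _) (by rw [mem_Icc]; omega)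
    omega
  · -- reverse maps into
    intro α hα
    rw [mem_filter, mem_filter, Fintype.mem_piFinset] at hα
    obtain ⟨⟨hrange, hwΤ⟩, hsum⟩ := hα
    rw [mem_filter, mem_piAntidiag]
    have hk'eval : ∀ i : Fin j,
        (if h : 1 ≤ i.1 + 1 ∧ i.1 + 1 ≤ j then α ⟨i.1 + 1 - 1, by omega⟩ else 0) = α i := by
      intro i
      rw [dif_pos ⟨by omega, by omega⟩]
      congr
    refine ⟨⟨?_, ?_⟩, ?_⟩
    · rw [hs, sum_Icc_one j (fun n => if h : 1 ≤ n ∧ n ≤ j then α ⟨n - 1, by omega⟩ else 0)]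
      exact (Finset.sum_congr rfl fun i _ => hk'eval i).trans hsum
    · intro n hn
      by_cases h : 1 ≤ n ∧ n ≤ j
      · rw [hs, mem_Icc]; omega
      · exact absurd (dif_neg h) hn
    · rw [hs, sum_Icc_one j (fun n => n * (if h : 1 ≤ n ∧ n ≤ j then α ⟨n - 1, by omega⟩ else 0))]
      refine Eq.trans (Finset.sum_congr rfl fun i _ => ?_) hwΤ
      rw [hk'eval i]
  · -- left inverse
    intro k hk
    rw [mem_filter, mem_piAntidiag] at hk
    funext n
    dsimp only
    by_cases h : 1 ≤ n ∧ n ≤ j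
    · rw [dif_pos h]
      congr 1
      omega
    · rw [dif_neg h]
      by_contra hne
      have := hk.1.2 n (fun hz => hne hz.symm)
      rw [hs, mem_Icc] at this
      omega
  · -- right inverse
    intro α hα
    funext i
    dsimp only
    rw [dif_pos ⟨by omega, by omega⟩]
    congr
  · -- values agree
    intro k hk
    rw [mem_filter, mem_piAntidiag] at hk
    obtain ⟨⟨hsum, hsupp⟩, hwt⟩ := hk
    have hsum' : (∑ i : Fin j, k (i.1 + 1)) = m := by
      rw [← sum_Icc_one j k, ← hs]; exact hsum
    dsimp only
    have hprod' : (∏ i : Fin j, t (i.1 + 1) ^ k (i.1 + 1)) = ∏ n ∈ s, t n ^ k n := by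
      rw [hs, prod_Icc_one j (fun n => t n ^ k n)]
    have hfact' : ((∏ i : Fin j, (k (i.1 + 1)).factorial : ℕ) : ℚ)
        = ((∏ n ∈ s, (k n).factorial : ℕ) : ℚ) :=
      congrArg (Nat.cast : ℕ → ℚ)
        (by rw [hs]; exact (prod_Icc_one j fun n => (k n).factorial).symm)
    rw [hsum', hprod', hfact']
    rw [← nsmul_eq_mul, ← Nat.cast_smul_eq_nsmul ℚ, smul_smul]
    congr 1
    have h1 : 1 ≤ m := hm.1
    have spec := Nat.multinomial_spec s k
    rw [hsum] at spec
    have specQ : ((∏ n ∈ s, (k n).factorial : ℕ) : ℚ) * (Nat.multinomial s k : ℚ)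
        = (m.factorial : ℚ) := by exact_mod_cast congrArg (Nat.cast : ℕ → ℚ) spec
    have hmfac : (m : ℚ) * ((m - 1).factorial : ℚ) = (m.factorial : ℚ) := by
      exact_mod_cast congrArg (Nat.cast : ℕ → ℚ) (Nat.mul_factorial_pred (by omega))
    have hP : ((∏ n ∈ s, (k n).factorial : ℕ) : ℚ) ≠ 0 :=
      Nat.cast_ne_zero.mpr (Nat.pos_iff_ne_zero.mp (Finset.prod_pos fun _ _ => Nat.factorial_pos _))
    have hm0 : (m : ℚ) ≠ 0 := Nat.cast_ne_zero.mpr (by omega)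
    rw [Nat.cast_prod] at specQ hP ⊢
    field_simp
    linear_combination specQ - hmfac


/-- `1 + Σ_{i ≥ 1} t_i X^i`. -/
noncomputable def FF (t : ℕ → K) : K⟦X⟧ := PowerSeries.mk fun n => if n = 0 then 1 else t n

noncomputable def GG (t : ℕ → K) : K⟦X⟧ :=
  PowerSeries.mk fun n => if n = 0 then 0 else hpoly n t

noncomputable def EE (t : ℕ → K) : K⟦X⟧ :=
  PowerSeries.mk fun n =>
    ∑ k ∈ Finset.range (n + 1), ((k.factorial : ℚ)⁻¹) • coeff n (GG t ^ k)

lemma GG_eq_LL (t : ℕ → K) : GG t = LL t := by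
  ext j
  rcases Nat.eq_zero_or_pos j with h0 | h1
  · subst h0
    rw [GG, LL, coeff_mk, coeff_mk]
    simp
  · rw [GG, coeff_mk, if_neg (by omega), coeff_LL t j h1]

lemma FF_eq (t : ℕ → K) : FF t = 1 + uu t := by
  ext n
  rw [FF, coeff_mk, map_add]
  rcases Nat.eq_zero_or_pos n with h0 | h1
  · subst h0; simp [uu, coeff_mk]
  · rw [if_neg (by omega)]
    simp [uu, coeff_mk, coeff_one, Nat.pos_iff_ne_zero.mp h1]

lemma constantCoeff_GG (t : ℕ → K) : constantCoeff (GG t) = 0 := by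
  rw [← coeff_zero_eq_constantCoeff_apply, GG, coeff_mk]
  simp

lemma Fode (t : ℕ → K) (n : ℕ) :
    coeff (n + 1) (FF t) * ((n : K) + 1) = coeff n (FF t * d⁄dX K (LL t)) := by
  classical
  set u := uu t with hu
  set du := d⁄dX K u with hdu
  have hu0 : constantCoeff u = 0 := by rw [hu]; exact constantCoeff_uu t
  set P : K⟦X⟧ := ∑ m ∈ Icc 1 (n + 1), ((-1 : ℚ) ^ (m - 1)) • (u ^ (m - 1) * du) with hP
  have hpowd : ∀ m : ℕ, 1 ≤ m → d⁄dX K (u ^ m) = m • (u ^ (m - 1) * du) := by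
    intro m hm
    rw [Derivation.leibniz_pow, smul_eq_mul, hdu]
  have hdL : ∀ b ≤ n, coeff b (d⁄dX K (LL t)) = coeff b P := by
    intro b hb
    rw [coeff_derivative, LL, coeff_mk]
    have hext : (∑ m ∈ Icc 1 (b + 1), ((-1 : ℚ) ^ (m - 1) / m) • coeff (b + 1) (u ^ m))
        = ∑ m ∈ Icc 1 (n + 1), ((-1 : ℚ) ^ (m - 1) / m) • coeff (b + 1) (u ^ m) :=
      Finset.sum_subset (Finset.Icc_subset_Icc_right (by omega))
        (fun m hm1 hm2 => by
          rw [mem_Icc] at hm1 hm2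
          rw [coeff_pow_eq_zero hu0 (by omega), smul_zero])
    rw [hext, Finset.sum_mul, hP, map_sum]
    refine Finset.sum_congr rfl fun m hm => ?_
    rw [mem_Icc] at hm
    rw [coeff_smul, smul_mul_assoc, ← coeff_derivative, hpowd m hm.1, map_nsmul,
      ← Nat.cast_smul_eq_nsmul ℚ, smul_smul]
    congr 1
    rw [div_mul_cancel₀]
    exact Nat.cast_ne_zero.mpr (by omega)
  have h1 : coeff n (FF t * d⁄dX K (LL t)) = coeff n (FF t * P) :=
    coeff_mul_congr (fun i _ => rfl) hdL
  have hFP : FF t * P = ∑ m ∈ Icc 1 (n + 1),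
      ((-1 : ℚ) ^ (m - 1)) • (u ^ (m - 1) * du + u ^ m * du) := by
    rw [FF_eq, ← hu, hP, Finset.mul_sum]
    refine Finset.sum_congr rfl fun m hm => ?_
    rw [mem_Icc] at hm
    rw [mul_smul_comm]
    congr 1
    have hum : u * u ^ (m - 1) = u ^ m := by
      rw [← pow_succ']
      congr 1
      omega
    rw [add_mul, one_mul, ← mul_assoc, hum]
  have hzero : coeff n (u ^ (n + 1) * du) = 0 := by
    rw [coeff_mul]
    refine Finset.sum_eq_zero fun p hp => ?_
    rw [Finset.HasAntidiagonal.mem_antidiagonal] at hp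
    rw [coeff_pow_eq_zero hu0 (by omega), zero_mul]
  have htele : ∀ m ∈ Icc 1 (n + 1),
      coeff n (((-1 : ℚ) ^ (m - 1)) • (u ^ (m - 1) * du + u ^ m * du))
      = ((-1 : ℚ) ^ (m - 1)) • coeff n (u ^ (m - 1) * du)
        - ((-1 : ℚ) ^ m) • coeff n (u ^ m * du) := by
    intro m hm
    rw [mem_Icc] at hm
    rw [coeff_smul, map_add, smul_add]
    have hms : (-1 : ℚ) ^ m = -(-1 : ℚ) ^ (m - 1) := by
      conv_lhs => rw [show m = (m - 1) + 1 by omega]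
      rw [pow_succ, mul_neg_one]
    rw [hms, neg_smul, sub_neg_eq_add]
  have hstep : coeff n (FF t * P) = t (n + 1) * ((n : K) + 1) := by
    rw [hFP, map_sum, Finset.sum_congr rfl htele]
    have e1 : ∑ m ∈ Icc 1 (n + 1),
        (((-1 : ℚ) ^ (m - 1)) • coeff n (u ^ (m - 1) * du)
          - ((-1 : ℚ) ^ m) • coeff n (u ^ m * du))
        = ∑ i ∈ range (n + 1),
        (((-1 : ℚ) ^ i) • coeff n (u ^ i * du)
          - ((-1 : ℚ) ^ (i + 1)) • coeff n (u ^ (i + 1) * du)) := by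
      rw [sum_Icc_one_range (n + 1) (fun m => ((-1 : ℚ) ^ (m - 1)) • coeff n (u ^ (m - 1) * du)
          - ((-1 : ℚ) ^ m) • coeff n (u ^ m * du))]
      exact Finset.sum_congr rfl fun i _ => by norm_num
    rw [e1, Finset.sum_range_sub' (fun i => ((-1 : ℚ) ^ i) • coeff n (u ^ i * du)) (n + 1)]
    rw [hzero, smul_zero, sub_zero]
    simp only [pow_zero, one_smul, one_mul]
    rw [hdu, coeff_derivative, hu]
    rw [uu, coeff_mk, if_neg (by omega)]
  rw [h1, hstep, FF, coeff_mk, if_neg (by omega)]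

lemma Fode' (t : ℕ → K) (n : ℕ) :
    coeff (n + 1) (FF t) * ((n : K) + 1) = coeff n (FF t * d⁄dX K (GG t)) := by
  rw [GG_eq_LL]
  exact Fode t n

lemma Eode (t : ℕ → K) (n : ℕ) :
    coeff (n + 1) (EE t) * ((n : K) + 1) = coeff n (EE t * d⁄dX K (GG t)) := by
  classical
  set G := GG t with hGdef
  set dG := d⁄dX K G with hdG
  have hG0 : constantCoeff G = 0 := by rw [hGdef]; exact constantCoeff_GG t
  set Q : K⟦X⟧ := ∑ k ∈ range (n + 1), ((k.factorial : ℚ)⁻¹) • G ^ k with hQ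
  have hEQ : ∀ a ≤ n, coeff a (EE t) = coeff a Q := by
    intro a ha
    rw [EE, coeff_mk, hQ, map_sum]
    have e2 : ∀ k ∈ range (n + 1), coeff a (((k.factorial : ℚ)⁻¹) • G ^ k)
        = ((k.factorial : ℚ)⁻¹) • coeff a (G ^ k) := fun k _ => coeff_smul _ _ _
    rw [Finset.sum_congr rfl e2]
    exact Finset.sum_subset
      (fun x hx => by rw [mem_range] at *; omega)
      (fun k hk1 hk2 => by
        rw [mem_range] at hk1 hk2
        rw [coeff_pow_eq_zero hG0 (by omega), smul_zero])
  have hRHS : coeff n (EE t * dG)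
      = ∑ k ∈ range (n + 1), ((k.factorial : ℚ)⁻¹) • coeff n (G ^ k * dG) := by
    rw [coeff_mul_congr hEQ (fun _ _ => rfl), hQ, Finset.sum_mul, map_sum]
    refine Finset.sum_congr rfl fun k _ => ?_
    rw [smul_mul_assoc, coeff_smul]
  have hterm : ∀ k : ℕ, (((k.factorial : ℚ)⁻¹) • coeff (n + 1) (G ^ k)) * ((n : K) + 1)
      = ((k.factorial : ℚ)⁻¹) • (k • coeff n (G ^ (k - 1) * dG)) := by
    intro k
    rw [smul_mul_assoc, ← coeff_derivative]
    congr 1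
    rw [Derivation.leibniz_pow, smul_eq_mul, ← hdG, map_nsmul]
  rw [hRHS, EE, coeff_mk, Finset.sum_mul, Finset.sum_congr rfl (fun k _ => hterm k),
    Finset.sum_range_succ']
  simp only [zero_smul, smul_zero, add_zero]
  refine Finset.sum_congr rfl fun k _ => ?_
  rw [← Nat.cast_smul_eq_nsmul ℚ, smul_smul, show k + 1 - 1 = k from rfl]
  congr 1
  have h1 : ((k : ℚ) + 1) ≠ 0 := by positivity
  have h2 : ((k.factorial : ℚ)) ≠ 0 := Nat.cast_ne_zero.mpr k.factorial_ne_zero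
  rw [Nat.factorial_succ]
  push_cast
  field_simp

lemma coeff0_eq (t : ℕ → K) : coeff 0 (FF t) = coeff 0 (EE t) := by
  rw [FF, EE, coeff_mk, coeff_mk]
  simp

lemma main_aux (t : ℕ → K) (n : ℕ) : coeff n (FF t) = coeff n (EE t) :=
  ode_unique (coeff0_eq t) (Fode' t) (Eode t) n

end HpolyAux

/-- Let `K` be a commutative `ℚ`-algebra and `t = (t₁, t₂, …)` a sequence in `K`. Then in
`K⟦k⟧` one has `1 + Σ_{i≥1} t_i k^i = exp(Σ_{j≥1} h_j(t) k^j)`, i.e.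
`log(1 + Σ_{i≥1} t_i k^i) = Σ_{j≥1} h_j(t) k^j`. Since `G := Σ_{j≥1} h_j(t) k^j` has zero
constant term, `exp G = Σ_{k≥0} G^k / k!` is well defined coefficientwise: its `n`-th
coefficient is `Σ_{k=0}^{n} (1/k!) • coeff n (G^k)`, which is how the identity is stated. -/
theorem statement0 {K : Type*} [CommRing K] [Algebra ℚ K] (t : ℕ → K)
    (F G : PowerSeries K)
    (hF : F = PowerSeries.mk fun n => if n = 0 then 1 else t n)
    (hG : G = PowerSeries.mk fun n => if n = 0 then 0 else hpoly n t) :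
    ∀ n : ℕ, PowerSeries.coeff n F =
      ∑ k ∈ Finset.range (n + 1),
        ((k.factorial : ℚ)⁻¹) • PowerSeries.coeff n (G ^ k) := by
  intro n
  have h := HpolyAux.main_aux t n
  rw [HpolyAux.EE] at h
  rw [PowerSeries.coeff_mk] at h
  rw [HpolyAux.GG, HpolyAux.FF] at h
  rw [hF, hG]
  exact h
end

section
/- Let K be a field of characteristic zero and let A, B, C : ℤ → K with B(n) ≠ 0 for all n. Define ρ(n) = −C(n)/B(n), θ₀(n) = 1, and recursively θ_{j+1}(n) = −(A(n)ρ(n+1)/B(n)) · Σ_{i=0}^{j} θ_i(n+1)θ_{j−i}(n) for j ≥ 0. Then for every n, the formal power series θ(n) := ε·ρ(n)·(1 + Σ_{j≥1} θ_j(n) ε^j) ∈ K⟦ε⟧ satisfies the discrete Riccati equation A(n)·θ(n+1)·θ(n) + B(n)·θ(n) + ε·C(n) = 0 in K⟦ε⟧. -/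
/-- Let `K` be a field of characteristic zero, `A, B, C : ℤ → K` with `B` nowhere zero.
With `ρ(n) = −C(n)/B(n)`, `θ₀(n) = 1` and
`θ_{j+1}(n) = −(A(n)ρ(n+1)/B(n)) Σ_{i=0}^{j} θ_i(n+1)θ_{j−i}(n)`,
the formal power series `θ(n) = ε·ρ(n)·(1 + Σ_{j≥1} θ_j(n) ε^j) ∈ K⟦ε⟧` satisfies the
discrete Riccati equation `A(n)·θ(n+1)·θ(n) + B(n)·θ(n) + ε·C(n) = 0` for every `n`. -/
theorem statement2 {K : Type*} [Field K] [CharZero K]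
    (A B C : ℤ → K) (hB : ∀ n, B n ≠ 0)
    (ρ : ℤ → K) (hρ : ∀ n, ρ n = -C n / B n)
    (θ : ℕ → ℤ → K) (hθ0 : ∀ n, θ 0 n = 1)
    (hθ : ∀ (j : ℕ) (n : ℤ), θ (j + 1) n =
      -(A n * ρ (n + 1) / B n) * ∑ i ∈ Finset.range (j + 1), θ i (n + 1) * θ (j - i) n)
    (Θ : ℤ → PowerSeries K)
    (hΘ : ∀ n, Θ n = PowerSeries.mk fun k => if k = 0 then 0 else ρ n * θ (k - 1) n) :
    ∀ n : ℤ, PowerSeries.C (R := K) (A n) * Θ (n + 1) * Θ n + PowerSeries.C (R := K) (B n) * Θ n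
      + PowerSeries.X * PowerSeries.C (R := K) (C n) = 0 := by
  intro n
  have hc : ∀ m k, PowerSeries.coeff (R := K) k (Θ m)
      = if k = 0 then 0 else ρ m * θ (k - 1) m := by
    intro m k; rw [hΘ, PowerSeries.coeff_mk]
  ext k
  rw [map_add, map_add, map_zero, mul_assoc, PowerSeries.coeff_C_mul,
    PowerSeries.coeff_C_mul, mul_comm PowerSeries.X (PowerSeries.C (R := K) (C n)),
    PowerSeries.coeff_C_mul, PowerSeries.coeff_X, PowerSeries.coeff_mul,
    Finset.Nat.sum_antidiagonal_eq_sum_range_succ_mk]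
  simp only [hc]
  match k with
  | 0 => simp
  | 1 =>
    simp only [Finset.sum_range_succ, Finset.sum_range_zero, if_pos rfl, if_neg one_ne_zero,
      Nat.sub_self, mul_zero, zero_mul, zero_add, add_zero, hθ0, hρ, mul_one, if_pos rfl,
      if_true, if_false, one_ne_zero]
    have hBn := hB n
    field_simp
    ring
  | (m + 2) =>
    rw [Finset.sum_range_succ, Finset.sum_range_succ']
    simp only [Nat.succ_sub_succ, Nat.sub_self, if_pos rfl, mul_zero, zero_mul, add_zero,
      zero_add, if_neg (Nat.succ_ne_zero _), Nat.succ_sub_one, Nat.sub_zero, if_true]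
    have hz : ∀ i ∈ Finset.range (m + 1),
        ρ (n+1) * θ i (n+1) * (if m + 1 - i = 0 then 0 else ρ n * θ (m + 1 - i - 1) n)
        = (ρ (n+1) * ρ n) * (θ i (n+1) * θ (m - i) n) := by
      intro i hi
      rw [Finset.mem_range] at hi
      have h1 : m + 1 - i = (m - i) + 1 := by omega
      rw [h1, if_neg (Nat.succ_ne_zero _)]
      simp only [Nat.add_sub_cancel]
      ring
    rw [Finset.sum_congr rfl hz, ← Finset.mul_sum]
    rw [hθ m n, if_neg (by omega : ¬ (m + 2 = 1))]
    have hBn := hB n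
    field_simp
    ring
end

section
/- Let K be a field of characteristic zero and let A, B, C, D, G : ℤ → K with D(n) ≠ 0 for all n. Define ρ(n) = −G(n)/D(n), θ₀(n) = 1, θ₁(n) = −(B(n)ρ(n+1) + C(n))/D(n), and for j ≥ 0, θ_{j+2}(n) = −(1/D(n))·[ A(n)ρ(n+1)ρ(n+2) Σ_{i+k+l=j, i,k,l≥0} θ_i(n+2)θ_k(n+1)θ_l(n) + B(n)ρ(n+1) Σ_{i=0}^{j+1} θ_i(n+1)θ_{j+1−i}(n) + C(n)θ_{j+1}(n) ]. Then for every n the formal power series θ(n) := ε·ρ(n)·(1 + Σ_{j≥1} θ_j(n) ε^j) ∈ K⟦ε⟧ satisfies the third-order discrete Riccati equation A(n)·θ(n+2)·θ(n+1)·θ(n) + B(n)·θ(n+1)·θ(n) + (ε·C(n) + D(n))·θ(n) + ε·G(n) = 0 in K⟦ε⟧. -/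
open PowerSeries Finset

lemma coeff_mk_mul' {K : Type*} [CommSemiring K] (f : ℕ → K) (g : PowerSeries K) (m : ℕ) :
    PowerSeries.coeff m (PowerSeries.mk f * g)
      = ∑ i ∈ Finset.range (m + 1), f i * PowerSeries.coeff (m - i) g := by
  rw [PowerSeries.coeff_mul, Finset.Nat.sum_antidiagonal_eq_sum_range_succ_mk]
  simp

/-- Let `K` be a field of characteristic zero, `A, B, C, D, G : ℤ → K` with `D` nowhere
zero. With `ρ(n) = −G(n)/D(n)`, `θ₀(n) = 1`, `θ₁(n) = −(B(n)ρ(n+1) + C(n))/D(n)` and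
`θ_{j+2}(n) = −(1/D(n))[A(n)ρ(n+1)ρ(n+2) Σ_{i+k+l=j} θ_i(n+2)θ_k(n+1)θ_l(n)`
` + B(n)ρ(n+1) Σ_{i=0}^{j+1} θ_i(n+1)θ_{j+1−i}(n) + C(n)θ_{j+1}(n)]`,
the formal power series `θ(n) = ε·ρ(n)·(1 + Σ_{j≥1} θ_j(n) ε^j) ∈ K⟦ε⟧` satisfies the
third-order discrete Riccati equation
`A(n)·θ(n+2)·θ(n+1)·θ(n) + B(n)·θ(n+1)·θ(n) + (ε·C(n) + D(n))·θ(n) + ε·G(n) = 0`. -/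
theorem statement3 {K : Type*} [Field K] [CharZero K]
    (A B C D G : ℤ → K) (hD : ∀ n, D n ≠ 0)
    (ρ : ℤ → K) (hρ : ∀ n, ρ n = -G n / D n)
    (θ : ℕ → ℤ → K) (hθ0 : ∀ n, θ 0 n = 1)
    (hθ1 : ∀ n, θ 1 n = -(B n * ρ (n + 1) + C n) / D n)
    (hθ : ∀ (j : ℕ) (n : ℤ), θ (j + 2) n =
      -(1 / D n) *
        (A n * ρ (n + 1) * ρ (n + 2) *
            ∑ i ∈ Finset.range (j + 1), ∑ k ∈ Finset.range (j - i + 1),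
              θ i (n + 2) * θ k (n + 1) * θ (j - i - k) n
          + B n * ρ (n + 1) *
            ∑ i ∈ Finset.range (j + 2), θ i (n + 1) * θ (j + 1 - i) n
          + C n * θ (j + 1) n))
    (Θ : ℤ → PowerSeries K)
    (hΘ : ∀ n, Θ n = PowerSeries.mk fun k => if k = 0 then 0 else ρ n * θ (k - 1) n) :
    ∀ n : ℤ, PowerSeries.C (A n) * Θ (n + 2) * Θ (n + 1) * Θ n
      + PowerSeries.C (B n) * Θ (n + 1) * Θ n
      + (PowerSeries.X * PowerSeries.C (C n) + PowerSeries.C (D n)) * Θ n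
      + PowerSeries.X * PowerSeries.C (G n) = 0 := by
  intro n
  set S : ℤ → PowerSeries K := fun m => PowerSeries.mk (fun k => θ k m) with hSdef
  have hS : ∀ m, Θ m = X * (PowerSeries.C (ρ m) * S m) := by
    intro m
    ext k
    cases k with
    | zero => simp [hΘ, hSdef]
    | succ k =>
        rw [hΘ, PowerSeries.coeff_succ_X_mul]
        simp [hSdef]
  have hgd : G n = -(ρ n * D n) := by rw [hρ n, div_mul_cancel₀ _ (hD n), neg_neg]
  have hGn : PowerSeries.C (G n) = -(PowerSeries.C (ρ n) * PowerSeries.C (D n)) := by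
    rw [hgd, map_neg, map_mul]
  have hP : X * (X * (PowerSeries.C (A n * ρ (n+2) * ρ (n+1))
        * (S (n+2) * (S (n+1) * S n))))
      + X * (PowerSeries.C (B n * ρ (n+1)) * (S (n+1) * S n))
      + X * (PowerSeries.C (C n) * S n)
      + PowerSeries.C (D n) * S n - PowerSeries.C (D n) = 0 := by
    ext k
    rcases k with _ | k
    · simp [hSdef, hθ0]
    · rw [map_zero, map_sub, map_add, map_add, map_add, coeff_succ_X_mul, coeff_succ_X_mul,
        coeff_succ_X_mul]
      have hCD : PowerSeries.coeff (k+1) (PowerSeries.C (D n)) = 0 := by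
        rw [PowerSeries.coeff_C]; simp
      rcases k with _ | j
      · rw [hCD]
        have h0 : PowerSeries.coeff 0 (X * (PowerSeries.C (A n * ρ (n+2) * ρ (n+1))
            * (S (n+2) * (S (n+1) * S n)))) = 0 := by
          simp
        rw [h0]
        simp only [hSdef, PowerSeries.coeff_C_mul, coeff_mk_mul', PowerSeries.coeff_mk]
        simp [hθ0, hθ1]
        field_simp [hD n]
        ring
      · rw [coeff_succ_X_mul, hCD]
        have hT : PowerSeries.coeff j (S (n+2) * (S (n+1) * S n))
            = ∑ i ∈ Finset.range (j + 1), ∑ k ∈ Finset.range (j - i + 1),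
                θ i (n + 2) * θ k (n + 1) * θ (j - i - k) n := by
          simp only [hSdef]
          rw [coeff_mk_mul']
          refine Finset.sum_congr rfl fun i hi => ?_
          rw [coeff_mk_mul', Finset.mul_sum]
          exact Finset.sum_congr rfl fun k hk => by rw [PowerSeries.coeff_mk, mul_assoc]
        have hU : PowerSeries.coeff (j+1) (S (n+1) * S n)
            = ∑ i ∈ Finset.range (j + 2), θ i (n + 1) * θ (j + 1 - i) n := by
          simp only [hSdef]
          rw [coeff_mk_mul']
          simp
        rw [PowerSeries.coeff_C_mul, PowerSeries.coeff_C_mul, PowerSeries.coeff_C_mul,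
          PowerSeries.coeff_C_mul, hT, hU]
        simp only [hSdef, PowerSeries.coeff_mk]
        rw [hθ j n]
        field_simp [hD n]
        ring
  rw [hS (n+2), hS (n+1), hS n, hGn]
  simp only [map_mul] at hP
  linear_combination (PowerSeries.X * PowerSeries.C (ρ n)) * hP
end

section
/- Let K be a field of characteristic zero. Let ρ, ω, σ : ℤ×ℤ → K with ρ and ω nowhere zero, and let θ_j : ℤ×ℤ → K for j ≥ 1. For each (n,m) define θ(n,m) := ε·ρ(n,m)·(1 + Σ_{j≥1} θ_j(n,m) ε^j) ∈ K⟦ε⟧ and η(n,m) := ω(n,m)·(1 + σ(n,m)·θ(n,m)). Suppose the formal conservation law holds: θ(n,m+1)·η(n,m) = η(n+1,m)·θ(n,m) in K⟦ε⟧ for all (n,m). Then: (a) ρ(n,m+1)·ω(n,m) = ω(n+1,m)·ρ(n,m) for all (n,m); and (b) for every s ≥ 1 and all (n,m), h_s(θ₁,…,θ_s)(n,m+1) − h_s(θ₁,…,θ_s)(n,m) = h_s(v, vθ₁, …, vθ_{s−1})(n+1,m) − h_s(v, vθ₁, …, vθ_{s−1})(n,m), where v := σρ. -/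
open Finset

section StatementAux

open PowerSeries

set_option linter.unusedSectionVars false

variable {K : Type*} [Field K] [CharZero K]

/-- The formal logarithm coefficients: `Lser f` is `log f` for `f` with constant coefficient 1. -/
noncomputable def Lser (f : PowerSeries K) : PowerSeries K :=
  PowerSeries.mk fun s => ∑ k ∈ Icc 1 s, ((-1 : ℚ) ^ (k - 1) / k) • coeff s ((f - 1) ^ k)

lemma coeff_Lser (f : PowerSeries K) (s : ℕ) :
    coeff s (Lser f) = ∑ k ∈ Icc 1 s, ((-1 : ℚ) ^ (k - 1) / k) • coeff s ((f - 1) ^ k) :=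
  coeff_mk _ _

lemma constantCoeff_Lser (f : PowerSeries K) : PowerSeries.constantCoeff (Lser f) = 0 := by
  rw [← coeff_zero_eq_constantCoeff, coeff_Lser]
  simp

lemma coeff_pow_mul_eq_zero {g h : PowerSeries K} (hg : PowerSeries.constantCoeff g = 0)
    {n k : ℕ} (hnk : n < k) : coeff n (g ^ k * h) = 0 := by
  have : (X : PowerSeries K) ^ k ∣ g ^ k * h :=
    Dvd.dvd.mul_right (pow_dvd_pow_of_dvd (PowerSeries.X_dvd_iff.2 hg) k) h
  exact PowerSeries.X_pow_dvd_iff.1 this n hnk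

lemma coeff_pow_eq_zero {g : PowerSeries K} (hg : PowerSeries.constantCoeff g = 0)
    {n k : ℕ} (hnk : n < k) : coeff n (g ^ k) = 0 := by
  simpa using coeff_pow_mul_eq_zero hg (h := 1) hnk

set_option linter.unusedSectionVars false

lemma coeff_deriv_Lser (f : PowerSeries K) (n : ℕ) :
    coeff n (d⁄dX K (Lser f)) =
      ∑ k ∈ Icc 1 (n + 1), ((-1 : ℚ) ^ (k - 1)) •
        coeff n ((f - 1) ^ (k - 1) * d⁄dX K f) := by
  rw [PowerSeries.coeff_derivative, coeff_Lser, Finset.sum_mul]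
  refine Finset.sum_congr rfl fun k hk => ?_
  have hk1 : 1 ≤ k := (Finset.mem_Icc.1 hk).1
  have hd : d⁄dX K ((f - 1) ^ k) = k • ((f - 1) ^ (k - 1) * d⁄dX K f) := by
    rw [Derivation.leibniz_pow, smul_eq_mul]
    rw [map_sub, Derivation.map_one_eq_zero, sub_zero]
  have h1 : coeff (n + 1) ((f - 1) ^ k) * (n + 1) = coeff n (d⁄dX K ((f - 1) ^ k)) :=
    (PowerSeries.coeff_derivative _ _).symm
  rw [smul_mul_assoc, h1, hd, map_nsmul, ← Nat.cast_smul_eq_nsmul ℚ, smul_smul,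
    div_mul_cancel₀]
  exact Nat.cast_ne_zero.mpr (by omega)

lemma coeff_neg_pow_mul (T g : PowerSeries K) (m j : ℕ) :
    coeff j ((-T) ^ m * g) = ((-1 : ℚ) ^ m) • coeff j (T ^ m * g) := by
  rw [Rat.smul_def, neg_pow, show ((-1 : K⟦X⟧)) ^ m = PowerSeries.C ((-1 : K) ^ m) by
    rw [map_pow, map_neg, map_one], mul_assoc, PowerSeries.coeff_C_mul]
  push_cast
  ring

lemma mul_deriv_Lser {f : PowerSeries K} (hf : PowerSeries.constantCoeff f = 1) :
    f * d⁄dX K (Lser f) = d⁄dX K f := by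
  have hT : PowerSeries.constantCoeff (f - 1) = 0 := by simp [hf]
  have hT' : PowerSeries.constantCoeff (-(f - 1)) = 0 := by simp [hf]
  ext n
  set G : PowerSeries K :=
    ∑ k ∈ Icc 1 (n + 1), (-(f - 1)) ^ (k - 1) * d⁄dX K f with hG
  have hcoe : ∀ j ≤ n, coeff j (d⁄dX K (Lser f)) = coeff j G := by
    intro j hj
    rw [coeff_deriv_Lser, hG, map_sum]
    rw [← Finset.sum_subset (Finset.Icc_subset_Icc_right (by omega) :
        Icc 1 (j + 1) ⊆ Icc 1 (n + 1))]
    · exact Finset.sum_congr rfl fun k _ => (coeff_neg_pow_mul _ _ _ _).symm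
    · intro k hk hk'
      have hkj : j < k - 1 := by
        simp only [Finset.mem_Icc] at hk hk'
        omega
      rw [coeff_neg_pow_mul, coeff_pow_mul_eq_zero hT hkj, smul_zero]
  have hfG : coeff n (f * d⁄dX K (Lser f)) = coeff n (f * G) := by
    rw [PowerSeries.coeff_mul, PowerSeries.coeff_mul]
    refine Finset.sum_congr rfl fun p hp => ?_
    rw [hcoe p.2 (by have := Finset.HasAntidiagonal.mem_antidiagonal.1 hp; omega)]
  rw [hfG]
  have hG' : G = (∑ i ∈ Finset.range (n + 1), (-(f - 1)) ^ i) * d⁄dX K f := by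
    rw [hG, ← Finset.sum_mul]
    congr 1
    rw [← Finset.Ico_add_one_right_eq_Icc, Finset.sum_Ico_eq_sum_range]
    refine Finset.sum_congr (by norm_num) fun i _ => by congr 1; omega
  have hfG2 : f * G = (1 - (-(f - 1)) ^ (n + 1)) * d⁄dX K f := by
    rw [hG', ← mul_assoc]
    congr 1
    have := geom_sum_mul (-(f - 1)) (n + 1)
    have hfx : f = 1 - (-(f - 1)) := by ring
    calc f * ∑ i ∈ Finset.range (n + 1), (-(f - 1)) ^ i
        = -((∑ i ∈ Finset.range (n + 1), (-(f - 1)) ^ i) * ((-(f - 1)) - 1)) := by ring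
      _ = 1 - (-(f - 1)) ^ (n + 1) := by rw [geom_sum_mul]; ring
  rw [hfG2, sub_mul, one_mul, map_sub, coeff_pow_mul_eq_zero hT' (by omega), sub_zero]

lemma deriv_eq_of_eq {g h : PowerSeries K} (h0 : PowerSeries.constantCoeff g =
    PowerSeries.constantCoeff h) (hd : d⁄dX K g = d⁄dX K h) : g = h := by
  ext n
  cases n with
  | zero => simpa using h0
  | succ n =>
    have := congrArg (coeff n) hd
    rw [PowerSeries.coeff_derivative, PowerSeries.coeff_derivative] at this
    exact mul_right_cancel₀ (Nat.cast_add_one_ne_zero n) this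

lemma Lser_mul {f g : PowerSeries K} (hf : PowerSeries.constantCoeff f = 1)
    (hg : PowerSeries.constantCoeff g = 1) : Lser (f * g) = Lser f + Lser g := by
  have hfg : PowerSeries.constantCoeff (f * g) = 1 := by rw [map_mul, hf, hg, one_mul]
  have hfg0 : f * g ≠ 0 := fun h => by simp [h] at hfg
  refine deriv_eq_of_eq ?_ ?_
  · rw [map_add, constantCoeff_Lser, constantCoeff_Lser, constantCoeff_Lser, add_zero]
  · have key : (f * g) * d⁄dX K (Lser (f * g)) = (f * g) * (d⁄dX K (Lser f) + d⁄dX K (Lser g)) := by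
      rw [mul_deriv_Lser hfg, Derivation.leibniz, smul_eq_mul, smul_eq_mul, mul_add]
      have e1 : f * g * d⁄dX K (Lser f) = g * (f * d⁄dX K (Lser f)) := by ring
      have e2 : f * g * d⁄dX K (Lser g) = f * (g * d⁄dX K (Lser g)) := by ring
      rw [e1, e2, mul_deriv_Lser hf, mul_deriv_Lser hg]
      ring
    have := mul_left_cancel₀ hfg0 key
    rw [this, map_add]

lemma hpoly_eq_coeff_Lser {f : PowerSeries K} (hf : PowerSeries.constantCoeff f = 1)
    {s : ℕ} (hs : 1 ≤ s) :
    hpoly s (fun i => coeff i f) = coeff s (Lser f) := by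
  set t : ℕ → K := fun i => coeff i f with ht
  set P : PowerSeries K := ∑ i : Fin s, PowerSeries.C (t (i.1 + 1)) * X ^ (i.1 + 1) with hP
  -- coefficients of P
  have hPco : ∀ m : ℕ, coeff m P =
      ∑ i : Fin s, t (i.1 + 1) * (if m = i.1 + 1 then 1 else 0) := by
    intro m
    rw [hP, map_sum]
    exact Finset.sum_congr rfl fun i _ => by
      rw [PowerSeries.coeff_C_mul, PowerSeries.coeff_X_pow]
  -- X^(s+1) divides (f-1) - P
  have hdvd : (X : PowerSeries K) ^ (s + 1) ∣ (f - 1) - P := by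
    rw [PowerSeries.X_pow_dvd_iff]
    intro m hm
    rw [map_sub, map_sub, hPco]
    rcases Nat.eq_zero_or_pos m with rfl | hm1
    · rw [coeff_zero_eq_constantCoeff_apply, hf]
      simp
    · have h1 : coeff m (1 : PowerSeries K) = 0 := by
        rw [PowerSeries.coeff_one, if_neg (by omega)]
      rw [h1, sub_zero]
      rw [Finset.sum_eq_single (⟨m - 1, by omega⟩ : Fin s)]
      · rw [if_pos (by simp; omega)]
        rw [mul_one]
        have : m - 1 + 1 = m := by omega
        simp [this, ht]
      · intro i _ hi
        rw [if_neg, mul_zero]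
        intro h
        exact hi (Fin.ext (by simp; omega))
      · simp
  have hTkP : ∀ k : ℕ, coeff s ((f - 1) ^ k) = coeff s (P ^ k) := by
    intro k
    have h2 : (X : PowerSeries K) ^ (s + 1) ∣ (f - 1) ^ k - P ^ k :=
      hdvd.trans (sub_dvd_pow_sub_pow _ _ k)
    have := PowerSeries.X_pow_dvd_iff.1 h2 s (by omega)
    rw [map_sub] at this
    exact sub_eq_zero.1 this
  -- multinomial expansion of coeff s (P^k)
  have hPk : ∀ k : ℕ, coeff s (P ^ k) =
      ∑ α ∈ (Finset.piAntidiag (Finset.univ : Finset (Fin s)) k).filter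
          (fun α => ∑ i, (i.1 + 1) * α i = s),
        (Nat.multinomial Finset.univ α : K) * ∏ i, t (i.1 + 1) ^ α i := by
    intro k
    rw [hP, Finset.sum_pow_eq_sum_piAntidiag, map_sum]
    rw [show (∑ α ∈ Finset.piAntidiag (Finset.univ : Finset (Fin s)) k,
        coeff s ((Nat.multinomial Finset.univ α : PowerSeries K) *
          ∏ i, (PowerSeries.C (t (i.1 + 1)) * X ^ (i.1 + 1)) ^ α i))
        = ∑ α ∈ Finset.piAntidiag (Finset.univ : Finset (Fin s)) k,
          if ∑ i, (i.1 + 1) * α i = s then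
            (Nat.multinomial Finset.univ α : K) * ∏ i, t (i.1 + 1) ^ α i else 0
        from ?_, ← Finset.sum_filter]
    refine Finset.sum_congr rfl fun α hα => ?_
    have hprod : ∏ i, (PowerSeries.C (t (i.1 + 1)) * X ^ (i.1 + 1)) ^ α i
        = PowerSeries.C (∏ i, t (i.1 + 1) ^ α i) * X ^ (∑ i, (i.1 + 1) * α i) := by
      simp only [mul_pow]
      rw [Finset.prod_mul_distrib, map_prod]
      congr 1
      · exact Finset.prod_congr rfl fun i _ => (map_pow _ _ _).symm
      · rw [← Finset.prod_pow_eq_pow_sum]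
        exact Finset.prod_congr rfl fun i _ => (pow_mul _ _ _).symm
    rw [hprod]
    have hcast : (Nat.multinomial Finset.univ α : PowerSeries K)
        = PowerSeries.C (Nat.multinomial Finset.univ α : K) := by
      rw [map_natCast]
    rw [hcast, ← mul_assoc, ← map_mul, PowerSeries.coeff_C_mul, PowerSeries.coeff_X_pow]
    by_cases h : ∑ i, (i.1 + 1) * α i = s
    · rw [if_pos h.symm, if_pos h, mul_one]
    · rw [if_neg (fun hh => h hh.symm), if_neg h, mul_zero]
  -- assemble
  rw [coeff_Lser]
  have hterm : ∀ k ∈ Icc 1 s, ((-1 : ℚ) ^ (k - 1) / k) • coeff s ((f - 1) ^ k)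
      = ∑ α ∈ (Finset.piAntidiag (Finset.univ : Finset (Fin s)) k).filter
          (fun α => ∑ i, (i.1 + 1) * α i = s),
        ((-1 : ℚ) ^ ((∑ i, α i) - 1) * ((∑ i, α i) - 1).factorial / ∏ i, (α i).factorial) •
          ∏ i, t (i.1 + 1) ^ α i := by
    intro k hk
    have hk1 : 1 ≤ k := (Finset.mem_Icc.1 hk).1
    rw [hTkP, hPk, Finset.smul_sum]
    refine Finset.sum_congr rfl fun α hα => ?_
    have hsum : ∑ i, α i = k := (Finset.mem_piAntidiag.1 (Finset.mem_filter.1 hα).1).1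
    have hprod0 : (∏ i, ((α i).factorial : ℚ)) ≠ 0 := by
      refine Finset.prod_ne_zero_iff.2 fun i _ => ?_
      exact_mod_cast (α i).factorial_ne_zero
    have hk0 : (k : ℚ) ≠ 0 := Nat.cast_ne_zero.2 (by omega)
    have h1 : (Nat.multinomial Finset.univ α : K) * ∏ i, t (i.1 + 1) ^ α i
        = ((Nat.multinomial Finset.univ α : ℚ)) • ∏ i, t (i.1 + 1) ^ α i := by
      rw [Rat.smul_def]
      norm_cast
    rw [h1, smul_smul, hsum]
    congr 1
    have spec' : (∏ i, ((α i).factorial : ℚ)) * (Nat.multinomial Finset.univ α : ℚ)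
        = (k.factorial : ℚ) := by
      rw [← hsum]
      exact_mod_cast Nat.multinomial_spec (s := Finset.univ) (f := α)
    have hmult : (Nat.multinomial Finset.univ α : ℚ)
        = (k.factorial : ℚ) / ∏ i, ((α i).factorial : ℚ) := by
      rw [eq_div_iff hprod0, mul_comm]
      exact spec'
    have hfact : (k.factorial : ℚ) = k * (k - 1).factorial := by
      exact_mod_cast (Nat.mul_factorial_pred (by omega)).symm
    rw [hmult, hfact]
    field_simp
    push_cast
    ring
  rw [Finset.sum_congr rfl hterm, hpoly]
  have hmaps : ∀ α ∈ (Fintype.piFinset fun _ : Fin s => Finset.range (s + 1)).filter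
      (fun α => ∑ i, (i.1 + 1) * α i = s), (∑ i, α i) ∈ Icc 1 s := by
    intro α hα
    have hw : ∑ i, (i.1 + 1) * α i = s := (Finset.mem_filter.1 hα).2
    rw [Finset.mem_Icc]
    constructor
    · by_contra h
      have h0 : ∑ i, α i = 0 := by omega
      have : ∀ i ∈ (Finset.univ : Finset (Fin s)), α i = 0 :=
        fun i hi => (Finset.sum_eq_zero_iff.1 h0) i hi
      have : ∑ i, (i.1 + 1) * α i = 0 :=
        Finset.sum_eq_zero fun i hi => by rw [this i hi, mul_zero]
      omega
    · calc ∑ i, α i ≤ ∑ i, (i.1 + 1) * α i :=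
            Finset.sum_le_sum fun i _ => Nat.le_mul_of_pos_left _ (by omega)
        _ = s := hw
  rw [← Finset.sum_fiberwise_of_maps_to hmaps]
  refine Finset.sum_congr rfl fun k hk => ?_
  have hsets : ((Fintype.piFinset fun _ : Fin s => Finset.range (s + 1)).filter
        (fun α => ∑ i, (i.1 + 1) * α i = s)).filter (fun α => ∑ i, α i = k)
      = (Finset.piAntidiag (Finset.univ : Finset (Fin s)) k).filter
          (fun α => ∑ i, (i.1 + 1) * α i = s) := by
    ext α
    simp only [Finset.mem_filter, Fintype.mem_piFinset, Finset.mem_range,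
      Finset.mem_piAntidiag, Finset.mem_univ, ne_eq, imp_true_iff, and_true]
    constructor
    · rintro ⟨⟨-, hw⟩, hk'⟩
      exact ⟨hk', hw⟩
    · rintro ⟨hk', hw⟩
      refine ⟨⟨fun i => ?_, hw⟩, hk'⟩
      have h2 : (i.1 + 1) * α i ≤ ∑ j, (j.1 + 1) * α j :=
        Finset.single_le_sum (f := fun j => (j.1 + 1) * α j)
          (fun j _ => Nat.zero_le _) (Finset.mem_univ i)
      have h1 : α i ≤ (i.1 + 1) * α i := Nat.le_mul_of_pos_left _ (by omega)
      omega
  rw [hsets]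

lemma hpoly_mul {f g : PowerSeries K} (hf : PowerSeries.constantCoeff f = 1)
    (hg : PowerSeries.constantCoeff g = 1) {s : ℕ} (hs : 1 ≤ s) :
    hpoly s (fun i => coeff i (f * g))
      = hpoly s (fun i => coeff i f) + hpoly s (fun i => coeff i g) := by
  rw [hpoly_eq_coeff_Lser (by rw [map_mul, hf, hg, one_mul]) hs,
    hpoly_eq_coeff_Lser hf hs, hpoly_eq_coeff_Lser hg hs, Lser_mul hf hg, map_add]

lemma hpoly_congr {j : ℕ} {t u : ℕ → K} (h : ∀ i, 1 ≤ i → i ≤ j → t i = u i) :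
    hpoly j t = hpoly j u := by
  unfold hpoly
  refine Finset.sum_congr rfl fun α hα => ?_
  congr 1
  refine Finset.prod_congr rfl fun i _ => ?_
  rw [h (i.1 + 1) (by omega) (by omega)]

lemma coeff_one_mul' (A B : PowerSeries K) :
    coeff 1 (A * B) = PowerSeries.constantCoeff A * coeff 1 B
      + coeff 1 A * PowerSeries.constantCoeff B := by
  rw [PowerSeries.coeff_mul, show (Finset.HasAntidiagonal.antidiagonal 1 : Finset (ℕ × ℕ))
    = {(0, 1), (1, 0)} by decide]
  simp

end StatementAux

section StatementMain

open PowerSeries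

/-- Let `K` be a field of characteristic zero, `ρ, ω, σ` functions on `ℤ×ℤ` with `ρ, ω`
nowhere zero, and `θ_j` (j ≥ 1) functions on `ℤ×ℤ`. Set
`θ(n,m) = ε·ρ(n,m)(1 + Σ_{j≥1} θ_j(n,m) ε^j) ∈ K⟦ε⟧` and `η(n,m) = ω(n,m)(1 + σ(n,m)θ(n,m))`.
If the formal conservation law `θ(n,m+1)·η(n,m) = η(n+1,m)·θ(n,m)` holds in `K⟦ε⟧`, then
(a) `ρ(n,m+1)ω(n,m) = ω(n+1,m)ρ(n,m)`, and (b) for every `s ≥ 1`,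
`Δ_m h_s(θ₁,…,θ_s) = Δ_n h_s(v, vθ₁, …, vθ_{s−1})` pointwise, where `v = σρ`. -/
theorem statement4 {K : Type*} [Field K] [CharZero K]
    (ρ ω σ : ℤ → ℤ → K) (hρ : ∀ n m, ρ n m ≠ 0) (hω : ∀ n m, ω n m ≠ 0)
    (θ : ℕ → ℤ → ℤ → K) (hθ0 : ∀ n m, θ 0 n m = 1)
    (Θ : ℤ → ℤ → PowerSeries K)
    (hΘ : ∀ n m, Θ n m = PowerSeries.mk fun k => if k = 0 then 0 else ρ n m * θ (k - 1) n m)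
    (η : ℤ → ℤ → PowerSeries K)
    (hη : ∀ n m, η n m =
      PowerSeries.C (ω n m) * (1 + PowerSeries.C (σ n m) * Θ n m))
    (hcons : ∀ n m : ℤ, Θ n (m + 1) * η n m = η (n + 1) m * Θ n m) :
    (∀ n m : ℤ, ρ n (m + 1) * ω n m = ω (n + 1) m * ρ n m) ∧
    (∀ s : ℕ, 1 ≤ s → ∀ n m : ℤ,
      hpoly s (fun i => θ i n (m + 1)) - hpoly s (fun i => θ i n m)
        = hpoly s (fun i => σ (n + 1) m * ρ (n + 1) m * θ (i - 1) (n + 1) m)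
          - hpoly s (fun i => σ n m * ρ n m * θ (i - 1) n m)) := by
  classical
  set U : ℤ → ℤ → PowerSeries K := fun n m => PowerSeries.mk fun k => θ k n m with hU
  have hU1 : ∀ n m, PowerSeries.constantCoeff (U n m) = 1 := by
    intro n m
    rw [← coeff_zero_eq_constantCoeff, hU, coeff_mk, hθ0]
  have hΘ' : ∀ n m, Θ n m = PowerSeries.C (ρ n m) * (X * U n m) := by
    intro n m
    rw [hΘ]
    ext k
    cases k with
    | zero => simp [hU]
    | succ k =>
      rw [coeff_mk, PowerSeries.coeff_C_mul, PowerSeries.coeff_succ_X_mul, hU, coeff_mk]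
      simp
  have hΘ0 : ∀ n m, PowerSeries.constantCoeff (Θ n m) = 0 := by
    intro n m
    rw [hΘ']
    simp
  have hΘ1 : ∀ n m, coeff 1 (Θ n m) = ρ n m := by
    intro n m
    rw [hΘ, coeff_mk]
    simp [hθ0]
  have hη0 : ∀ n m, PowerSeries.constantCoeff (η n m) = ω n m := by
    intro n m
    rw [hη]
    simp [hΘ0]
  have parta : ∀ n m : ℤ, ρ n (m + 1) * ω n m = ω (n + 1) m * ρ n m := by
    intro n m
    have h := congrArg (coeff 1) (hcons n m)
    rw [coeff_one_mul', coeff_one_mul', hΘ0, hΘ0, hΘ1, hΘ1, hη0, hη0] at h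
    simpa using h
  refine ⟨parta, fun s hs n m => ?_⟩
  set A : PowerSeries K := 1 + PowerSeries.C (σ n m * ρ n m) * (X * U n m) with hA
  set B : PowerSeries K :=
    1 + PowerSeries.C (σ (n + 1) m * ρ (n + 1) m) * (X * U (n + 1) m) with hB
  have hA1 : PowerSeries.constantCoeff A = 1 := by rw [hA]; simp
  have hB1 : PowerSeries.constantCoeff B = 1 := by rw [hB]; simp
  have hηA : η n m = PowerSeries.C (ω n m) * A := by
    rw [hη, hΘ', hA, map_mul]
    ring
  have hηB : η (n + 1) m = PowerSeries.C (ω (n + 1) m) * B := by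
    rw [hη, hΘ', hB, map_mul]
    ring
  have hkey : U n (m + 1) * A = B * U n m := by
    have h := hcons n m
    rw [hΘ' n (m + 1), hΘ' n m, hηA, hηB] at h
    have h2 : PowerSeries.C (ρ n (m + 1) * ω n m) * (X * (U n (m + 1) * A))
        = PowerSeries.C (ω (n + 1) m * ρ n m) * (X * (B * U n m)) := by
      rw [map_mul, map_mul]
      linear_combination h
    rw [parta n m] at h2
    have hC0 : PowerSeries.C (ω (n + 1) m * ρ n m) ≠ 0 := by
      intro hcc
      have := congrArg (PowerSeries.constantCoeff) hcc
      simp only [PowerSeries.constantCoeff_C, map_zero] at this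
      exact mul_ne_zero (hω _ _) (hρ _ _) this
    exact mul_left_cancel₀ PowerSeries.X_ne_zero (mul_left_cancel₀ hC0 h2)
  have hadd1 := hpoly_mul (hU1 n (m + 1)) hA1 hs
  have hadd2 := hpoly_mul hB1 (hU1 n m) hs
  rw [hkey, hadd2] at hadd1
  -- translate each hpoly
  have eU : ∀ n' m', hpoly s (fun i => coeff i (U n' m')) = hpoly s (fun i => θ i n' m') := by
    intro n' m'
    congr 1
    funext i
    rw [hU, coeff_mk]
  have eA : hpoly s (fun i => coeff i A)
      = hpoly s (fun i => σ n m * ρ n m * θ (i - 1) n m) := by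
    refine hpoly_congr fun i h1 h2 => ?_
    obtain ⟨j, rfl⟩ : ∃ j, i = j + 1 := ⟨i - 1, by omega⟩
    rw [hA, map_add, PowerSeries.coeff_one, if_neg (by omega), PowerSeries.coeff_C_mul,
      PowerSeries.coeff_succ_X_mul, hU, coeff_mk, zero_add]
    simp
  have eB : hpoly s (fun i => coeff i B)
      = hpoly s (fun i => σ (n + 1) m * ρ (n + 1) m * θ (i - 1) (n + 1) m) := by
    refine hpoly_congr fun i h1 h2 => ?_
    obtain ⟨j, rfl⟩ : ∃ j, i = j + 1 := ⟨i - 1, by omega⟩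
    rw [hB, map_add, PowerSeries.coeff_one, if_neg (by omega), PowerSeries.coeff_C_mul,
      PowerSeries.coeff_succ_X_mul, hU, coeff_mk, zero_add]
    simp
  rw [eU, eU, eA, eB] at hadd1
  linear_combination -hadd1

end StatementMain
end

section
/- Let K be a field, p, q, α, β ∈ K, and let u : ℤ×ℤ → K satisfy the NQC equation [(p−α)u−(p+β)ũ][(p−β)û−(p+α)ũ̂] − [(q−α)u−(q+β)û][(q−β)ũ−(q+α)ũ̂] = 0 at every (n,m). Set P₊ = (p+α)(p+β), P₋ = (p−α)(p−β), Q₊ = (q+α)(q+β), γ₁ = 1/((α−p)u + (β+p)ũ), γ₂ = 1/((α−q)u + (β+q)û), F := γ₁·[(α²+β²−2p²)uũ + P₋u² + P₊ũ²]/(P₋u − P₊ũ̃), J := γ₂·[P₊ũ − Q₊û + (q²−p²)u], and assume all the denominators (α−p)u+(β+p)ũ, (α−q)u+(β+q)û, P₋u − P₊ũ̃ as well as F and J are nowhere zero. Then the conservation law Δ_m ln F = Δ_n ln J holds in the multiplicative sense: F(n,m+1)·J(n,m) = F(n,m)·J(n+1,m) for all (n,m). -/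
set_option maxHeartbeats 1000000 in
set_option maxRecDepth 8000 in
/-- First conservation law of the NQC equation, in multiplicative form: with
`γ₁ = 1/((α−p)u + (β+p)ũ)`, `γ₂ = 1/((α−q)u + (β+q)û)`,
`F = γ₁[(α²+β²−2p²)uũ + P₋u² + P₊ũ²]/(P₋u − P₊ũ̃)` and
`J = γ₂[P₊ũ − Q₊û + (q²−p²)u]`, one has `F̂·J = F·J̃`, i.e. `Δ_m ln F = Δ_n ln J`. -/
theorem statement12 {K : Type*} [Field K] (p q α β : K)
    (u : ℤ → ℤ → K)
    (hNQC : ∀ n m : ℤ,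
      ((p - α) * u n m - (p + β) * u (n + 1) m) *
        ((p - β) * u n (m + 1) - (p + α) * u (n + 1) (m + 1))
      - ((q - α) * u n m - (q + β) * u n (m + 1)) *
        ((q - β) * u (n + 1) m - (q + α) * u (n + 1) (m + 1)) = 0)
    (Pp Pm Qp : K)
    (hPp : Pp = (p + α) * (p + β)) (hPm : Pm = (p - α) * (p - β))
    (hQp : Qp = (q + α) * (q + β))
    (γ₁ γ₂ : ℤ → ℤ → K)
    (hγ₁ : ∀ n m, γ₁ n m = 1 / ((α - p) * u n m + (β + p) * u (n + 1) m))
    (hγ₂ : ∀ n m, γ₂ n m = 1 / ((α - q) * u n m + (β + q) * u n (m + 1)))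
    (F J : ℤ → ℤ → K)
    (hF : ∀ n m, F n m = γ₁ n m *
      ((α ^ 2 + β ^ 2 - 2 * p ^ 2) * u n m * u (n + 1) m
        + Pm * u n m ^ 2 + Pp * u (n + 1) m ^ 2) /
      (Pm * u n m - Pp * u (n + 2) m))
    (hJ : ∀ n m, J n m = γ₂ n m *
      (Pp * u (n + 1) m - Qp * u n (m + 1) + (q ^ 2 - p ^ 2) * u n m))
    (hd1 : ∀ n m, (α - p) * u n m + (β + p) * u (n + 1) m ≠ 0)
    (hd2 : ∀ n m, (α - q) * u n m + (β + q) * u n (m + 1) ≠ 0)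
    (hd3 : ∀ n m, Pm * u n m - Pp * u (n + 2) m ≠ 0)
    (hFne : ∀ n m, F n m ≠ 0) (hJne : ∀ n m, J n m ≠ 0) :
    ∀ n m : ℤ, F n (m + 1) * J n m = F n m * J (n + 1) m := by
  subst hPp hPm hQp
  intro n m
  have hFA : ∀ n m : ℤ, F n m = ((β - p) * u n m + (α + p) * u (n + 1) m) /
      ((p - α) * (p - β) * u n m - (p + α) * (p + β) * u (n + 2) m) := by
    intro n m
    rw [hF, hγ₁, one_div_mul_eq_div, div_div,
      div_eq_div_iff (mul_ne_zero (hd1 n m) (hd3 n m)) (hd3 n m)]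
    ring
  have hJe : ∀ n m : ℤ, J n m = ((p + α) * (p + β) * u (n + 1) m
      - (q + α) * (q + β) * u n (m + 1) + (q ^ 2 - p ^ 2) * u n m) /
      ((α - q) * u n m + (β + q) * u n (m + 1)) := by
    intro n m
    rw [hJ, hγ₂, one_div_mul_eq_div]
  have hE1 := hNQC (n + 1) m
  rw [show n + 1 + 1 = n + 2 by ring] at hE1
  rw [hFA, hFA, hJe, hJe, div_mul_div_comm, div_mul_div_comm,
    div_eq_div_iff (mul_ne_zero (hd3 n (m + 1)) (hd2 n m))
      (mul_ne_zero (hd3 n m) (hd2 (n + 1) m))]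
  rw [show n + 1 + 1 = n + 2 by ring]
  linear_combination
    (-1*(α)*(β)^3*(u (n+2) m)*(u n (m+1)) - 1*(α)^2*(β)^2*(u (n+2) m)*(u (n+1) (m+1)) - 1*(α)^2*(β)^2*(u (n+1) m)*(u n (m+1)) + 1*(α)^2*(β)^2*(u n m)*(u (n+1) (m+1)) - 1*(α)^2*(β)^2*(u n m)*(u (n+2) m) - 1*(α)^3*(β)*(u (n+1) m)*(u (n+2) m) - 1*(q)*(α)*(β)^2*(u (n+2) m)*(u n (m+1)) + 1*(q)*(α)*(β)^2*(u n m)*(u (n+2) m) - 1*(q)*(α)^2*(β)*(u (n+2) m)*(u (n+1) (m+1)) - 1*(q)*(α)^2*(β)*(u (n+1) m)*(u n (m+1)) + 1*(q)*(α)^2*(β)*(u (n+1) m)*(u (n+2) m) + 1*(q)*(α)^2*(β)*(u n m)*(u (n+1) (m+1)) - 1*(p)*(β)^3*(u (n+2) m)*(u n (m+1)) - 2*(p)*(α)*(β)^2*(u (n+2) m)*(u (n+1) (m+1)) - 1*(p)*(α)*(β)^2*(u n m)*(u (n+2) m) - 1*(p)*(α)^2*(β)*(u (n+2) m)*(u (n+1)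 (m+1)) + 1*(p)*(α)^2*(β)*(u (n+1) m)*(u n (m+1)) - 2*(p)*(α)^2*(β)*(u (n+1) m)*(u (n+2) m) - 1*(p)*(α)^2*(β)*(u n m)*(u (n+1) (m+1)) - 1*(p)*(α)^3*(u (n+1) m)*(u (n+2) m) - 1*(p)*(q)*(β)^2*(u (n+2) m)*(u n (m+1)) + 1*(p)*(q)*(β)^2*(u n m)*(u (n+2) m) - 2*(p)*(q)*(α)*(β)*(u (n+2) m)*(u (n+1) (m+1)) + 2*(p)*(q)*(α)*(β)*(u (n+1) m)*(u (n+2) m) - 1*(p)*(q)*(α)^2*(u (n+2) m)*(u (n+1) (m+1)) + 1*(p)*(q)*(α)^2*(u (n+1) m)*(u n (m+1)) + 1*(p)*(q)*(α)^2*(u (n+1) m)*(u (n+2) m) - 1*(p)*(q)*(α)^2*(u n m)*(u (n+1) (m+1)) - 1*(p)^2*(β)^2*(u (n+2) m)*(u (n+1) (m+1)) + 1*(p)^2*(β)^2*(u (n+1) m)*(u n (m+1)) - 1*(p)^2*(β)^2*(u n m)*(u (n+1) (m+1)) - 2*(p)^2*(α)*(β)*(u (n+2) m)*(u (n+1) (m+1))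 + 1*(p)^2*(α)*(β)*(u (n+2) m)*(u n (m+1)) - 1*(p)^2*(α)*(β)*(u (n+1) m)*(u (n+2) m) - 2*(p)^2*(α)^2*(u (n+1) m)*(u (n+2) m) + 1*(p)^2*(α)^2*(u n m)*(u (n+2) m) - 1*(p)^2*(q)*(β)*(u (n+2) m)*(u (n+1) (m+1)) + 1*(p)^2*(q)*(β)*(u (n+1) m)*(u n (m+1)) + 1*(p)^2*(q)*(β)*(u (n+1) m)*(u (n+2) m) - 1*(p)^2*(q)*(β)*(u n m)*(u (n+1) (m+1)) - 2*(p)^2*(q)*(α)*(u (n+2) m)*(u (n+1) (m+1)) + 1*(p)^2*(q)*(α)*(u (n+2) m)*(u n (m+1)) + 2*(p)^2*(q)*(α)*(u (n+1) m)*(u (n+2) m) - 1*(p)^2*(q)*(α)*(u n m)*(u (n+2) m) - 1*(p)^3*(β)*(u (n+2) m)*(u (n+1) (m+1)) + 1*(p)^3*(β)*(u (n+2) m)*(u n (m+1)) - 1*(p)^3*(β)*(u (n+1) m)*(u n (m+1)) + 1*(p)^3*(β)*(u n m)*(u (n+1) (m+1)) - 1*(p)^3*(α)*(u (n+1) m)*(u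 (n+2) m) + 1*(p)^3*(α)*(u n m)*(u (n+2) m) - 1*(p)^3*(q)*(u (n+2) m)*(u (n+1) (m+1)) + 1*(p)^3*(q)*(u (n+2) m)*(u n (m+1)) - 1*(p)^3*(q)*(u (n+1) m)*(u n (m+1)) + 1*(p)^3*(q)*(u (n+1) m)*(u (n+2) m) + 1*(p)^3*(q)*(u n m)*(u (n+1) (m+1)) - 1*(p)^3*(q)*(u n m)*(u (n+2) m)) * hNQC n m
    + (1*(α)*(β)^3*(u n m)*(u n (m+1)) + 1*(α)^2*(β)^2*(u (n+1) m)*(u n (m+1)) + 1*(α)^2*(β)^2*(u n m)^2 + 1*(α)^3*(β)*(u n m)*(u (n+1) m) + 1*(q)*(α)*(β)^2*(u n m)*(u n (m+1)) - 1*(q)*(α)*(β)^2*(u n m)^2 + 1*(q)*(α)^2*(β)*(u (n+1) m)*(u n (m+1)) - 1*(q)*(α)^2*(β)*(u n m)*(u (n+1) m) + 1*(p)*(β)^3*(u n m)*(u n (m+1)) + 2*(p)*(α)*(β)^2*(u (n+1) m)*(u n (m+1)) + 1*(p)*(α)*(β)^2*(u n m)^2 + 1*(p)*(α)^2*(β)*(u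 (n+1) m)*(u n (m+1)) + 2*(p)*(α)^2*(β)*(u n m)*(u (n+1) m) + 1*(p)*(α)^3*(u n m)*(u (n+1) m) + 1*(p)*(q)*(β)^2*(u n m)*(u n (m+1)) - 1*(p)*(q)*(β)^2*(u n m)^2 + 2*(p)*(q)*(α)*(β)*(u (n+1) m)*(u n (m+1)) - 2*(p)*(q)*(α)*(β)*(u n m)*(u (n+1) m) + 1*(p)*(q)*(α)^2*(u (n+1) m)*(u n (m+1)) - 1*(p)*(q)*(α)^2*(u n m)*(u (n+1) m) + 1*(p)^2*(β)^2*(u (n+1) m)*(u n (m+1)) + 2*(p)^2*(α)*(β)*(u (n+1) m)*(u n (m+1)) - 1*(p)^2*(α)*(β)*(u n m)*(u n (m+1)) + 1*(p)^2*(α)*(β)*(u n m)*(u (n+1) m) + 2*(p)^2*(α)^2*(u n m)*(u (n+1) m) - 1*(p)^2*(α)^2*(u n m)^2 + 1*(p)^2*(q)*(β)*(u (n+1) m)*(u n (m+1)) - 1*(p)^2*(q)*(β)*(u n m)*(u (n+1) m) + 2*(p)^2*(q)*(α)*(u (n+1) m)*(u n (m+1)) - 1*(p)^2*(q)*(α)*(u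 n m)*(u n (m+1)) - 2*(p)^2*(q)*(α)*(u n m)*(u (n+1) m) + 1*(p)^2*(q)*(α)*(u n m)^2 + 1*(p)^3*(β)*(u (n+1) m)*(u n (m+1)) - 1*(p)^3*(β)*(u n m)*(u n (m+1)) + 1*(p)^3*(α)*(u n m)*(u (n+1) m) - 1*(p)^3*(α)*(u n m)^2 + 1*(p)^3*(q)*(u (n+1) m)*(u n (m+1)) - 1*(p)^3*(q)*(u n m)*(u n (m+1)) - 1*(p)^3*(q)*(u n m)*(u (n+1) m) + 1*(p)^3*(q)*(u n m)^2) * hE1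
end

section
/- Let K be a field, p, q, α, β ∈ K, and let u : ℤ×ℤ → K satisfy the NQC equation [(p−α)u−(p+β)ũ][(p−β)û−(p+α)ũ̂] − [(q−α)u−(q+β)û][(q−β)ũ−(q+α)ũ̂] = 0 at every (n,m). Set P₊ = (p+α)(p+β), P₋ = (p−α)(p−β), Q₊ = (q+α)(q+β), and assume P₋u − P₊ũ̃ and P₊ũ − Q₊û + (q²−p²)u are nowhere zero. Then at every (n,m): Δ_m[ ((α²+β²−2p²)ũũ̃ + P₋ũ² + P₊ũ̃²) / ((P₋u − P₊ũ̃)(P₋ũ − P₊ũ̃̃)) ] = Δ_n[ ((α²+β²−2p²)uũ + P₋u² + P₊ũ²) / ((P₊ũ − Q₊û + (q²−p²)u)(P₋u − P₊ũ̃)) ]. -/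
private lemma aux1 {K : Type*} [CommRing K]
    (r s x dA dB u v bb hh cc gg aa g0 dd : K)
    (hx : x = r * u + s * v) (h1 : u * dA = bb * hh) (h2 : v * dB = cc * gg)
    (h3 : cc * dA = aa * hh) (h4 : r * bb * dB + s * aa * gg = g0 * dd) :
    x * (dA * dB) = g0 * hh * dd := by
  linear_combination (dA * dB) * hx + (r * dB) * h1 + (s * dA) * h2 + (s * gg) * h3 + hh * h4

private lemma aux3 {K : Type*} [CommRing K]
    (nfh v1 v2 d20 d21 c1 g1 b1 h1 a0 h0 ap0 g0 : K)
    (hnfh : nfh = v1 * v2) (e1 : v1 * d21 = c1 * g1) (e2 : v2 * d21 = b1 * h1)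
    (e3 : c1 * d20 = a0 * h0) (e4 : b1 * d20 = ap0 * g0) :
    nfh * (d20 ^ 2 * d21 ^ 2) = a0 * ap0 * (g0 * h0) * (g1 * h1) := by
  linear_combination (d20 ^ 2 * d21 ^ 2) * hnfh + (d20 ^ 2 * v2 * d21) * e1
    + (d20 ^ 2 * c1 * g1) * e2 + (b1 * d20 * g1 * h1) * e3 + (a0 * h0 * g1 * h1) * e4

private lemma auxKey {K : Type*} [CommRing K]
    (nfh x1 x2 a0 ap0 d22 d20 d21 d10 d11 g0 h0 g1 h1 : K)
    (f1 : x1 * (d20 * d21) = g0 * h0 * d10)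
    (f2 : x2 * (d21 * d22) = g1 * h1 * d11)
    (f3 : nfh * (d20 ^ 2 * d21 ^ 2) = a0 * ap0 * (g0 * h0) * (g1 * h1)) :
    nfh * (d20 * (d10 * d11)) * (d20 * (d21 * (d21 * d22)))
      = a0 * ap0 * d22 * (x1 * x2) * (d20 * (d21 * (d21 * d22))) := by
  linear_combination (d10 * (d11 * d22)) * f3
    - (a0 * ap0 * d22 * (x2 * (d21 * d22))) * f1
    - (a0 * ap0 * d22 * (g0 * (h0 * d10))) * f2


private lemma auxR {K : Type*} [CommRing K]
    (nf nj0 aa d20 d21 d10 d11 : K)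
    (hkey2 : nf * (d20 * d10) - nj0 * (d11 * d21) + nf * (d20 * d21) = aa * d21) :
    ((nf * (d20 * d10) - d21 * d11 * nj0) * (d10 * d11) + d21 * d11 * (d20 * d10) * nf)
        * (d20 * (d10 * d11))
      = aa * (d21 * d11 * (d20 * d10) * (d10 * d11)) := by
  linear_combination (d10 ^ 2 * d11 ^ 2 * d20) * hkey2

set_option maxHeartbeats 1000000 in
/-- Second (four-point) conservation law of the NQC equation:
`Δ_m[((α²+β²−2p²)ũũ̃ + P₋ũ² + P₊ũ̃²)/((P₋u − P₊ũ̃)(P₋ũ − P₊ũ̃̃))]`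
`= Δ_n[((α²+β²−2p²)uũ + P₋u² + P₊ũ²)/((P₊ũ − Q₊û + (q²−p²)u)(P₋u − P₊ũ̃))]`. -/
theorem statement13 {K : Type*} [Field K] (p q α β : K)
    (u : ℤ → ℤ → K)
    (hNQC : ∀ n m : ℤ,
      ((p - α) * u n m - (p + β) * u (n + 1) m) *
        ((p - β) * u n (m + 1) - (p + α) * u (n + 1) (m + 1))
      - ((q - α) * u n m - (q + β) * u n (m + 1)) *
        ((q - β) * u (n + 1) m - (q + α) * u (n + 1) (m + 1)) = 0)
    (Pp Pm Qp : K)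
    (hPp : Pp = (p + α) * (p + β)) (hPm : Pm = (p - α) * (p - β))
    (hQp : Qp = (q + α) * (q + β))
    (hd1 : ∀ n m : ℤ, Pm * u n m - Pp * u (n + 2) m ≠ 0)
    (hd2 : ∀ n m : ℤ,
      Pp * u (n + 1) m - Qp * u n (m + 1) + (q ^ 2 - p ^ 2) * u n m ≠ 0)
    (F J : ℤ → ℤ → K)
    (hF : ∀ n m, F n m =
      ((α ^ 2 + β ^ 2 - 2 * p ^ 2) * u (n + 1) m * u (n + 2) m
        + Pm * u (n + 1) m ^ 2 + Pp * u (n + 2) m ^ 2) /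
      ((Pm * u n m - Pp * u (n + 2) m) * (Pm * u (n + 1) m - Pp * u (n + 3) m)))
    (hJ : ∀ n m, J n m =
      ((α ^ 2 + β ^ 2 - 2 * p ^ 2) * u n m * u (n + 1) m
        + Pm * u n m ^ 2 + Pp * u (n + 1) m ^ 2) /
      ((Pp * u (n + 1) m - Qp * u n (m + 1) + (q ^ 2 - p ^ 2) * u n m) *
        (Pm * u n m - Pp * u (n + 2) m))) :
    ∀ n m : ℤ, F n (m + 1) - F n m = J (n + 1) m - J n m := by
  intro n m
  subst hPp hPm hQp
  have i1 : (n : ℤ) + 1 + 1 = n + 2 := by ring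
  have i2 : (n : ℤ) + 1 + 2 = n + 3 := by ring
  have i3 : (n : ℤ) + 2 + 1 = n + 3 := by ring
  have e0 := hNQC n m
  have e1 := hNQC (n + 1) m
  rw [i1] at e1
  have e2 := hNQC (n + 2) m
  rw [i3] at e2
  have y1 := hd1 n m
  have y2 := hd1 (n + 1) m
  rw [i2] at y2
  have x1 := hd1 n (m + 1)
  have x2 := hd1 (n + 1) (m + 1)
  rw [i2] at x2
  have w1 := hd2 n m
  have z1 := hd2 (n + 1) m
  rw [i1] at z1
  have v1 := hd2 (n + 2) m
  rw [i3] at v1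
  rw [hF n (m + 1), hF n m, hJ (n + 1) m, hJ n m, i1, i2]
  set a0 := u n m with ha0
  set a1 := u (n + 1) m with ha1
  set a2 := u (n + 2) m with ha2
  set a3 := u (n + 3) m with ha3
  set b0 := u n (m + 1) with hb0
  set b1 := u (n + 1) (m + 1) with hb1
  set b2 := u (n + 2) (m + 1) with hb2
  set b3 := u (n + 3) (m + 1) with hb3
  have gA : ((p - β) * b0 - (p + α) * b1) * ((p + α) * (p + β) * a1 - (q + α) * (q + β) * b0 + (q ^ 2 - p ^ 2) * a0) = ((q - α) * a0 - (q + β) * b0) * ((p - β) * (q + α) * b0 - (p + α) * (q - β) * a1) := by linear_combination (-(p + α)) * e0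
  have gB : ((p - α) * b1 - (p + β) * b2) * ((p + α) * (p + β) * a2 - (q + α) * (q + β) * b1 + (q ^ 2 - p ^ 2) * a1) = ((q - β) * a1 - (q + α) * b1) * ((p - α) * (q + β) * b1 - (p + β) * (q - α) * a2) := by linear_combination (-(p + β)) * e1
  have gA2 : ((p - β) * b1 - (p + α) * b2) * ((p + α) * (p + β) * a2 - (q + α) * (q + β) * b1 + (q ^ 2 - p ^ 2) * a1) = ((q - α) * a1 - (q + β) * b1) * ((p - β) * (q + α) * b1 - (p + α) * (q - β) * a2) := by linear_combination (-(p + α)) * e1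
  have gB2 : ((p - α) * b2 - (p + β) * b3) * ((p + α) * (p + β) * a3 - (q + α) * (q + β) * b2 + (q ^ 2 - p ^ 2) * a2) = ((q - β) * a2 - (q + α) * b2) * ((p - α) * (q + β) * b2 - (p + β) * (q - α) * a3) := by linear_combination (-(p + β)) * e2
  have g1 : ((q - β) * a1 - (q + α) * b1) * ((p + α) * (p + β) * a1 - (q + α) * (q + β) * b0 + (q ^ 2 - p ^ 2) * a0) = ((p - α) * a0 - (p + β) * a1) * ((p - β) * (q + α) * b0 - (p + α) * (q - β) * a1) := by linear_combination (-(q + α)) * e0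
  have g2 : ((q - α) * a1 - (q + β) * b1) * ((p + α) * (p + β) * a1 - (q + α) * (q + β) * b0 + (q ^ 2 - p ^ 2) * a0) = ((p - β) * a0 - (p + α) * a1) * ((p - α) * (q + β) * b0 - (p + β) * (q - α) * a1) := by linear_combination (-(q + β)) * e0
  have g1s : ((q - β) * a2 - (q + α) * b2) * ((p + α) * (p + β) * a2 - (q + α) * (q + β) * b1 + (q ^ 2 - p ^ 2) * a1) = ((p - α) * a1 - (p + β) * a2) * ((p - β) * (q + α) * b1 - (p + α) * (q - β) * a2) := by linear_combination (-(q + α)) * e1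
  have hK0 : (p - α) * ((q - α) * a0 - (q + β) * b0) * ((p + α) * (p + β) * a2 - (q + α) * (q + β) * b1 + (q ^ 2 - p ^ 2) * a1) + (p + α) * ((p - α) * a0 - (p + β) * a1) * ((p - α) * (q + β) * b1 - (p + β) * (q - α) * a2) = ((p - α) * (q + β) * b0 - (p + β) * (q - α) * a1) * ((p - α) * (p - β) * a0 - (p + α) * (p + β) * a2) := by
    linear_combination (α * β + q * α - p * β - p * q) * e0
  have hK1 : (p - α) * ((q - α) * a1 - (q + β) * b1) * ((p + α) * (p + β) * a3 - (q + α) * (q + β) * b2 + (q ^ 2 - p ^ 2) * a2) + (p + α) * ((p - α) * a1 - (p + β) * a2) * ((p - α) * (q + β) * b2 - (p + β) * (q - α) * a3) = ((p - α) * (q + β) * b1 - (p + β) * (q - α) * a2) * ((p - α) * (p - β) * a1 - (p + α) * (p + β) * a3) := by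
    linear_combination (α * β + q * α - p * β - p * q) * e1
  have hX1id : ((p - α) * (p - β) * b0 - (p + α) * (p + β) * b2) = (p - α) * ((p - β) * b0 - (p + α) * b1) + (p + α) * ((p - α) * b1 - (p + β) * b2) := by ring
  have hX2id : ((p - α) * (p - β) * b1 - (p + α) * (p + β) * b3) = (p - α) * ((p - β) * b1 - (p + α) * b2) + (p + α) * ((p - α) * b2 - (p + β) * b3) := by ring
  have hNFhid : ((α ^ 2 + β ^ 2 - 2 * p ^ 2) * b1 * b2 + (p - α) * (p - β) * b1 ^ 2 + (p + α) * (p + β) * b2 ^ 2) = ((p - α) * b1 - (p + β) * b2) * ((p - β) * b1 - (p + α) * b2) := by ring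
  have f1 : ((p - α) * (p - β) * b0 - (p + α) * (p + β) * b2) * (((p + α) * (p + β) * a1 - (q + α) * (q + β) * b0 + (q ^ 2 - p ^ 2) * a0) * ((p + α) * (p + β) * a2 - (q + α) * (q + β) * b1 + (q ^ 2 - p ^ 2) * a1)) = ((p - α) * (q + β) * b0 - (p + β) * (q - α) * a1) * ((p - β) * (q + α) * b0 - (p + α) * (q - β) * a1) * ((p - α) * (p - β) * a0 - (p + α) * (p + β) * a2) :=
    aux1 (p - α) (p + α) _ _ _ _ _ _ _ _ _ _ _ _ hX1id gA gB g1 hK0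
  have f2 : ((p - α) * (p - β) * b1 - (p + α) * (p + β) * b3) * (((p + α) * (p + β) * a2 - (q + α) * (q + β) * b1 + (q ^ 2 - p ^ 2) * a1) * ((p + α) * (p + β) * a3 - (q + α) * (q + β) * b2 + (q ^ 2 - p ^ 2) * a2)) = ((p - α) * (q + β) * b1 - (p + β) * (q - α) * a2) * ((p - β) * (q + α) * b1 - (p + α) * (q - β) * a2) * ((p - α) * (p - β) * a1 - (p + α) * (p + β) * a3) :=
    aux1 (p - α) (p + α) _ _ _ _ _ _ _ _ _ _ _ _ hX2id gA2 gB2 g1s hK1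
  have f3 : ((α ^ 2 + β ^ 2 - 2 * p ^ 2) * b1 * b2 + (p - α) * (p - β) * b1 ^ 2 + (p + α) * (p + β) * b2 ^ 2) * (((p + α) * (p + β) * a1 - (q + α) * (q + β) * b0 + (q ^ 2 - p ^ 2) * a0) ^ 2 * ((p + α) * (p + β) * a2 - (q + α) * (q + β) * b1 + (q ^ 2 - p ^ 2) * a1) ^ 2)
      = ((p - α) * a0 - (p + β) * a1) * ((p - β) * a0 - (p + α) * a1) * (((p - α) * (q + β) * b0 - (p + β) * (q - α) * a1) * ((p - β) * (q + α) * b0 - (p + α) * (q - β) * a1)) * (((p - α) * (q + β) * b1 - (p + β) * (q - α) * a2) * ((p - β) * (q + α) * b1 - (p + α) * (q - β) * a2)) :=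
    aux3 _ _ _ _ _ _ _ _ _ _ _ _ _ hNFhid gB gA2 g1 g2
  have key2 : ((α ^ 2 + β ^ 2 - 2 * p ^ 2) * a1 * a2 + (p - α) * (p - β) * a1 ^ 2 + (p + α) * (p + β) * a2 ^ 2) * (((p + α) * (p + β) * a1 - (q + α) * (q + β) * b0 + (q ^ 2 - p ^ 2) * a0) * ((p - α) * (p - β) * a0 - (p + α) * (p + β) * a2)) - ((α ^ 2 + β ^ 2 - 2 * p ^ 2) * a0 * a1 + (p - α) * (p - β) * a0 ^ 2 + (p + α) * (p + β) * a1 ^ 2) * (((p - α) * (p - β) * a1 - (p + α) * (p + β) * a3) * ((p + α) * (p + β) * a2 - (q + α) * (q + β) * b1 + (q ^ 2 - p ^ 2) * a1)) + ((α ^ 2 + β ^ 2 - 2 * p ^ 2) * a1 * a2 + (p - α) * (p - β) * a1 ^ 2 + (p + α) * (p + β) * a2 ^ 2) * (((p + α) * (p + β) * a1 - (q + α) * (q + β) * b0 + (q ^ 2 - p ^ 2) * a0) * ((p + α) * (p + β) * a2 - (q + α) * (q + β) * b1 + (q ^ 2 - p ^ 2) * a1))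
      = ((p - α) * a0 - (p + β) * a1) * ((p - β) * a0 - (p + α) * a1) * ((p + α) * (p + β) * a3 - (q + α) * (q + β) * b2 + (q ^ 2 - p ^ 2) * a2) * ((p + α) * (p + β) * a2 - (q + α) * (q + β) * b1 + (q ^ 2 - p ^ 2) * a1) := by
    linear_combination (-(q + α) * (q + β) * ((p - α) * a1 - (p + β) * a2) * ((p - β) * a1 - (p + α) * a2)) * e0
      + ((q + α) * (q + β) * ((p - α) * a0 - (p + β) * a1) * ((p - β) * a0 - (p + α) * a1)) * e1
  have hMne : ((p + α) * (p + β) * a1 - (q + α) * (q + β) * b0 + (q ^ 2 - p ^ 2) * a0) * (((p + α) * (p + β) * a2 - (q + α) * (q + β) * b1 + (q ^ 2 - p ^ 2) * a1) * (((p + α) * (p + β) * a2 - (q + α) * (q + β) * b1 + (q ^ 2 - p ^ 2) * a1) * ((p + α) * (p + β) * a3 - (q + α) * (q + β) * b2 + (q ^ 2 - p ^ 2) * a2))) ≠ 0 :=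
    mul_ne_zero w1 (mul_ne_zero z1 (mul_ne_zero z1 v1))
  have hL : ((α ^ 2 + β ^ 2 - 2 * p ^ 2) * b1 * b2 + (p - α) * (p - β) * b1 ^ 2 + (p + α) * (p + β) * b2 ^ 2) / (((p - α) * (p - β) * b0 - (p + α) * (p + β) * b2) * ((p - α) * (p - β) * b1 - (p + α) * (p + β) * b3)) = ((p - α) * a0 - (p + β) * a1) * ((p - β) * a0 - (p + α) * a1) * ((p + α) * (p + β) * a3 - (q + α) * (q + β) * b2 + (q ^ 2 - p ^ 2) * a2) / (((p + α) * (p + β) * a1 - (q + α) * (q + β) * b0 + (q ^ 2 - p ^ 2) * a0) * (((p - α) * (p - β) * a0 - (p + α) * (p + β) * a2) * ((p - α) * (p - β) * a1 - (p + α) * (p + β) * a3))) := by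
    rw [div_eq_div_iff (mul_ne_zero x1 x2) (mul_ne_zero w1 (mul_ne_zero y1 y2))]
    exact mul_right_cancel₀ hMne (auxKey _ _ _ _ _ _ _ _ _ _ _ _ _ _ f1 f2 f3)
  have hR : ((α ^ 2 + β ^ 2 - 2 * p ^ 2) * a1 * a2 + (p - α) * (p - β) * a1 ^ 2 + (p + α) * (p + β) * a2 ^ 2) / (((p + α) * (p + β) * a2 - (q + α) * (q + β) * b1 + (q ^ 2 - p ^ 2) * a1) * ((p - α) * (p - β) * a1 - (p + α) * (p + β) * a3)) - ((α ^ 2 + β ^ 2 - 2 * p ^ 2) * a0 * a1 + (p - α) * (p - β) * a0 ^ 2 + (p + α) * (p + β) * a1 ^ 2) / (((p + α) * (p + β) * a1 - (q + α) * (q + β) * b0 + (q ^ 2 - p ^ 2) * a0) * ((p - α) * (p - β) * a0 - (p + α) * (p + β) * a2)) + ((α ^ 2 + β ^ 2 - 2 * p ^ 2) * a1 * a2 + (p - α) * (p - β) * a1 ^ 2 + (p + α) * (p + β) * a2 ^ 2) / (((p - α) * (p - β) * a0 - (p + α) * (p + β) * a2) * ((p - α) * (p - β) * a1 - (p + α)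 * (p + β) * a3)) = ((p - α) * a0 - (p + β) * a1) * ((p - β) * a0 - (p + α) * a1) * ((p + α) * (p + β) * a3 - (q + α) * (q + β) * b2 + (q ^ 2 - p ^ 2) * a2) / (((p + α) * (p + β) * a1 - (q + α) * (q + β) * b0 + (q ^ 2 - p ^ 2) * a0) * (((p - α) * (p - β) * a0 - (p + α) * (p + β) * a2) * ((p - α) * (p - β) * a1 - (p + α) * (p + β) * a3))) := by
    rw [div_sub_div _ _ (mul_ne_zero z1 y2) (mul_ne_zero w1 y1),
      div_add_div _ _ (mul_ne_zero (mul_ne_zero z1 y2) (mul_ne_zero w1 y1)) (mul_ne_zero y1 y2),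
      div_eq_div_iff (mul_ne_zero (mul_ne_zero (mul_ne_zero z1 y2) (mul_ne_zero w1 y1)) (mul_ne_zero y1 y2)) (mul_ne_zero w1 (mul_ne_zero y1 y2))]
    exact auxR _ _ _ _ _ _ _ key2
  linear_combination hL - hR
end

section
/- Let K be a field, p, q ∈ K, and let x, y, z : ℤ×ℤ → K satisfy the discrete Boussinesq system z̃ − xx̃ + y = 0, ẑ − xx̂ + y = 0, (x̂ − x̃)(z − x·x̃̂ + ỹ̂) − p + q = 0 at every (n,m). Assume x·x̃̃ − ỹ̃ − z and x̃ − x̂ are nowhere zero. Then at every (n,m): Δ_m[ (x̃̃̃ − x) / ((x·x̃̃ − ỹ̃ − z)(x̃·x̃̃̃ − ỹ̃̃ − z̃)) ] = Δ_n[ 1 / ((x̃ − x̂)(x·x̃̃ − ỹ̃ − z)) ]. -/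
set_option maxHeartbeats 2000000 in
/-- Second conservation law of the DBSQ equation:
`Δ_m[(x̃̃̃ − x)/((x·x̃̃ − ỹ̃ − z)(x̃·x̃̃̃ − ỹ̃̃ − z̃))]`
`= Δ_n[1/((x̃ − x̂)(x·x̃̃ − ỹ̃ − z))]`. -/
theorem statement15 {K : Type*} [Field K] (p q : K)
    (x y z : ℤ → ℤ → K)
    (hE1 : ∀ n m : ℤ, z (n + 1) m - x n m * x (n + 1) m + y n m = 0)
    (hE2 : ∀ n m : ℤ, z n (m + 1) - x n m * x n (m + 1) + y n m = 0)
    (hE3 : ∀ n m : ℤ, (x n (m + 1) - x (n + 1) m) *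
      (z n m - x n m * x (n + 1) (m + 1) + y (n + 1) (m + 1)) - p + q = 0)
    (hDne : ∀ n m : ℤ, x n m * x (n + 2) m - y (n + 2) m - z n m ≠ 0)
    (hωne : ∀ n m : ℤ, x (n + 1) m - x n (m + 1) ≠ 0)
    (F J : ℤ → ℤ → K)
    (hF : ∀ n m, F n m = (x (n + 3) m - x n m) /
      ((x n m * x (n + 2) m - y (n + 2) m - z n m) *
        (x (n + 1) m * x (n + 3) m - y (n + 3) m - z (n + 1) m)))
    (hJ : ∀ n m, J n m = 1 /
      ((x (n + 1) m - x n (m + 1)) *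
        (x n m * x (n + 2) m - y (n + 2) m - z n m))) :
    ∀ n m : ℤ, F n (m + 1) - F n m = J (n + 1) m - J n m := by
  intro n m
  have r1 : n + 1 + 1 = n + 2 := by ring
  have r2 : n + 1 + 2 = n + 3 := by ring
  have r3 : n + 2 + 1 = n + 3 := by ring
  -- equation instances
  have e3a := hE3 n m
  have e3b := hE3 (n + 1) m
  rw [r1] at e3b
  have e3c := hE3 (n + 2) m
  rw [r3] at e3c
  have e1a := hE1 n m
  have e1b := hE1 (n + 1) m
  rw [r1] at e1b
  have e1c := hE1 (n + 1) (m + 1)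
  rw [r1] at e1c
  have e1d := hE1 (n + 2) (m + 1)
  rw [r3] at e1d
  have e2a := hE2 n m
  have e2b := hE2 (n + 1) m
  have e2c := hE2 (n + 2) m
  have e2d := hE2 (n + 3) m
  -- nonzero facts
  have hω0 : x (n + 1) m - x n (m + 1) ≠ 0 := hωne n m
  have hω1 : x (n + 2) m - x (n + 1) (m + 1) ≠ 0 := by
    have h := hωne (n + 1) m; rwa [r1] at h
  have hEω : x (n + 3) m - x (n + 2) (m + 1) ≠ 0 := by
    have h := hωne (n + 2) m; rwa [r3] at h
  have hD00 : x n m * x (n + 2) m - y (n + 2) m - z n m ≠ 0 := hDne n m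
  have hD10 : x (n + 1) m * x (n + 3) m - y (n + 3) m - z (n + 1) m ≠ 0 := by
    have h := hDne (n + 1) m; rwa [r2] at h
  have hD01 : x n (m + 1) * x (n + 2) (m + 1) - y (n + 2) (m + 1) - z n (m + 1) ≠ 0 :=
    hDne n (m + 1)
  have hD11 : x (n + 1) (m + 1) * x (n + 3) (m + 1) - y (n + 3) (m + 1)
      - z (n + 1) (m + 1) ≠ 0 := by
    have h := hDne (n + 1) (m + 1); rwa [r2] at h
  -- key factorizations of the four denominators
  have hd1 : (x (n + 1) m - x n (m + 1)) *
      (x n m * x (n + 2) m - y (n + 2) m - z n m) =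
      (x (n + 1) m - x n (m + 1)) * (x n m - x (n + 2) (m + 1)) *
        (x (n + 2) m - x (n + 1) (m + 1)) + (p - q) := by
    linear_combination e3a - (x (n + 1) m - x n (m + 1)) * e2c
      + (x (n + 1) m - x n (m + 1)) * e1c
  have hd2 : (x (n + 2) m - x (n + 1) (m + 1)) *
      (x (n + 1) m * x (n + 3) m - y (n + 3) m - z (n + 1) m) =
      (x (n + 2) m - x (n + 1) (m + 1)) * (x (n + 1) m - x (n + 3) (m + 1)) *
        (x (n + 3) m - x (n + 2) (m + 1)) + (p - q) := by
    linear_combination e3b - (x (n + 2) m - x (n + 1) (m + 1)) * e2d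
      + (x (n + 2) m - x (n + 1) (m + 1)) * e1d
  have hd3 : (x (n + 2) m - x (n + 1) (m + 1)) *
      (x n (m + 1) * x (n + 2) (m + 1) - y (n + 2) (m + 1) - z n (m + 1)) =
      (x (n + 1) m - x n (m + 1)) * (x (n + 2) m - x (n + 1) (m + 1)) *
        (x n m - x (n + 2) (m + 1)) + (p - q) := by
    linear_combination e3b + (x (n + 2) m - x (n + 1) (m + 1)) * e1a
      - (x (n + 2) m - x (n + 1) (m + 1)) * e2a
  have hd4 : (x (n + 3) m - x (n + 2) (m + 1)) *
      (x (n + 1) (m + 1) * x (n + 3) (m + 1) - y (n + 3) (m + 1) - z (n + 1) (m + 1)) =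
      (x (n + 3) m - x (n + 2) (m + 1)) * (x (n + 2) m - x (n + 1) (m + 1)) *
        (x (n + 1) m - x (n + 3) (m + 1)) + (p - q) := by
    linear_combination e3c + (x (n + 3) m - x (n + 2) (m + 1)) * e1b
      - (x (n + 3) m - x (n + 2) (m + 1)) * e2b
  -- nonzero numerators
  have hN1 : (x (n + 1) m - x n (m + 1)) * (x n m - x (n + 2) (m + 1)) *
      (x (n + 2) m - x (n + 1) (m + 1)) + (p - q) ≠ 0 := by
    rw [← hd1]; exact mul_ne_zero hω0 hD00
  have hN2 : (x (n + 2) m - x (n + 1) (m + 1)) * (x (n + 1) m - x (n + 3) (m + 1)) *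
      (x (n + 3) m - x (n + 2) (m + 1)) + (p - q) ≠ 0 := by
    rw [← hd2]; exact mul_ne_zero hω1 hD10
  have hN3 : (x (n + 1) m - x n (m + 1)) * (x (n + 2) m - x (n + 1) (m + 1)) *
      (x n m - x (n + 2) (m + 1)) + (p - q) ≠ 0 := by
    rw [← hd3]; exact mul_ne_zero hω1 hD01
  have hN4 : (x (n + 3) m - x (n + 2) (m + 1)) * (x (n + 2) m - x (n + 1) (m + 1)) *
      (x (n + 1) m - x (n + 3) (m + 1)) + (p - q) ≠ 0 := by
    rw [← hd4]; exact mul_ne_zero hEω hD11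
  -- closed forms for the denominators
  have eD00 : x n m * x (n + 2) m - y (n + 2) m - z n m =
      ((x (n + 1) m - x n (m + 1)) * (x n m - x (n + 2) (m + 1)) *
        (x (n + 2) m - x (n + 1) (m + 1)) + (p - q)) / (x (n + 1) m - x n (m + 1)) :=
    (eq_div_iff hω0).mpr (by linear_combination hd1)
  have eD10 : x (n + 1) m * x (n + 3) m - y (n + 3) m - z (n + 1) m =
      ((x (n + 2) m - x (n + 1) (m + 1)) * (x (n + 1) m - x (n + 3) (m + 1)) *
        (x (n + 3) m - x (n + 2) (m + 1)) + (p - q)) /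
        (x (n + 2) m - x (n + 1) (m + 1)) :=
    (eq_div_iff hω1).mpr (by linear_combination hd2)
  have eD01 : x n (m + 1) * x (n + 2) (m + 1) - y (n + 2) (m + 1) - z n (m + 1) =
      ((x (n + 1) m - x n (m + 1)) * (x (n + 2) m - x (n + 1) (m + 1)) *
        (x n m - x (n + 2) (m + 1)) + (p - q)) / (x (n + 2) m - x (n + 1) (m + 1)) :=
    (eq_div_iff hω1).mpr (by linear_combination hd3)
  have eD11 : x (n + 1) (m + 1) * x (n + 3) (m + 1) - y (n + 3) (m + 1)
      - z (n + 1) (m + 1) =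
      ((x (n + 3) m - x (n + 2) (m + 1)) * (x (n + 2) m - x (n + 1) (m + 1)) *
        (x (n + 1) m - x (n + 3) (m + 1)) + (p - q)) /
        (x (n + 3) m - x (n + 2) (m + 1)) :=
    (eq_div_iff hEω).mpr (by linear_combination hd4)
  have hJ1 := hJ (n + 1) m
  rw [r1, r2] at hJ1
  have hFm1 : F n (m + 1) = (x (n + 3) (m + 1) - x n (m + 1)) *
      ((x (n + 2) m - x (n + 1) (m + 1)) * (x (n + 3) m - x (n + 2) (m + 1))) /
      (((x (n + 1) m - x n (m + 1)) * (x n m - x (n + 2) (m + 1)) *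
          (x (n + 2) m - x (n + 1) (m + 1)) + (p - q)) *
        ((x (n + 2) m - x (n + 1) (m + 1)) * (x (n + 1) m - x (n + 3) (m + 1)) *
          (x (n + 3) m - x (n + 2) (m + 1)) + (p - q))) := by
    rw [hF n (m + 1), eD01, eD11, div_mul_div_comm, div_div_eq_mul_div]
    congr 1
    ring
  have hFm : F n m = (x (n + 3) m - x n m) *
      ((x (n + 1) m - x n (m + 1)) * (x (n + 2) m - x (n + 1) (m + 1))) /
      (((x (n + 1) m - x n (m + 1)) * (x n m - x (n + 2) (m + 1)) *
          (x (n + 2) m - x (n + 1) (m + 1)) + (p - q)) *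
        ((x (n + 2) m - x (n + 1) (m + 1)) * (x (n + 1) m - x (n + 3) (m + 1)) *
          (x (n + 3) m - x (n + 2) (m + 1)) + (p - q))) := by
    rw [hF n m, eD00, eD10, div_mul_div_comm, div_div_eq_mul_div]
  have hJa : J (n + 1) m = 1 /
      ((x (n + 2) m - x (n + 1) (m + 1)) * (x (n + 1) m - x (n + 3) (m + 1)) *
        (x (n + 3) m - x (n + 2) (m + 1)) + (p - q)) := by
    have hc : (x (n + 2) m - x (n + 1) (m + 1)) *
        (((x (n + 2) m - x (n + 1) (m + 1)) * (x (n + 1) m - x (n + 3) (m + 1)) *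
          (x (n + 3) m - x (n + 2) (m + 1)) + (p - q)) /
          (x (n + 2) m - x (n + 1) (m + 1))) =
        (x (n + 2) m - x (n + 1) (m + 1)) * (x (n + 1) m - x (n + 3) (m + 1)) *
          (x (n + 3) m - x (n + 2) (m + 1)) + (p - q) := by
      field_simp
    rw [hJ1, eD10, hc]
  have hJb : J n m = 1 /
      ((x (n + 1) m - x n (m + 1)) * (x n m - x (n + 2) (m + 1)) *
        (x (n + 2) m - x (n + 1) (m + 1)) + (p - q)) := by
    have hc : (x (n + 1) m - x n (m + 1)) *
        (((x (n + 1) m - x n (m + 1)) * (x n m - x (n + 2) (m + 1)) *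
          (x (n + 2) m - x (n + 1) (m + 1)) + (p - q)) /
          (x (n + 1) m - x n (m + 1))) =
        (x (n + 1) m - x n (m + 1)) * (x n m - x (n + 2) (m + 1)) *
          (x (n + 2) m - x (n + 1) (m + 1)) + (p - q) := by
      field_simp
    rw [hJ n m, eD00, hc]
  rw [hFm1, hFm, hJa, hJb, div_sub_div_same, div_sub_div _ _ hN2 hN1,
    div_eq_div_iff (mul_ne_zero hN1 hN2) (mul_ne_zero hN2 hN1)]
  ring
end

section
/- Let K be a field, p, q ∈ K, and let x, y : ℤ×ℤ → K satisfy the lattice nonlinear Schrödinger (lNLS) system ỹ − ŷ − y[(x̃ − x̂)y + p − q] = 0 and x̃ − x̂ + x̃̂·[(x̃ − x̂)y + p − q] = 0 at every (n,m), where x̃̂ = x(n+1,m+1). Assume x̃, x̃̃, 1 + x̃̃·y, and x̂ − x̃ are nowhere zero. Then the conservation law Δ_m ln( −x̃̃/(x̃(1 + x̃̃ y)) ) = Δ_n ln( (x̂ − x̃)/x̃ ) holds in the multiplicative sense: [−x̃̃/(x̃(1 + x̃̃ y))](n,m+1) · [(x̂ − x̃)/x̃](n,m) = [−x̃̃/(x̃(1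 + x̃̃ y))](n,m) · [(x̂ − x̃)/x̃](n+1,m) for all (n,m). -/
/-- First conservation law of the lattice nonlinear Schrödinger (lNLS) equation, in
multiplicative form: with `F = −x̃̃/(x̃(1 + x̃̃y))` and `J = (x̂ − x̃)/x̃`,
one has `F̂·J = F·J̃`, i.e. `Δ_m ln F = Δ_n ln J`. -/
theorem statement16 {K : Type*} [Field K] (p q : K)
    (x y : ℤ → ℤ → K)
    (hE1 : ∀ n m : ℤ, y (n + 1) m - y n (m + 1)
      - y n m * ((x (n + 1) m - x n (m + 1)) * y n m + p - q) = 0)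
    (hE2 : ∀ n m : ℤ, x (n + 1) m - x n (m + 1)
      + x (n + 1) (m + 1) * ((x (n + 1) m - x n (m + 1)) * y n m + p - q) = 0)
    (hx1 : ∀ n m : ℤ, x (n + 1) m ≠ 0)
    (hx2 : ∀ n m : ℤ, x (n + 2) m ≠ 0)
    (hden : ∀ n m : ℤ, 1 + x (n + 2) m * y n m ≠ 0)
    (hω : ∀ n m : ℤ, x n (m + 1) - x (n + 1) m ≠ 0)
    (F J : ℤ → ℤ → K)
    (hF : ∀ n m, F n m = -x (n + 2) m / (x (n + 1) m * (1 + x (n + 2) m * y n m)))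
    (hJ : ∀ n m, J n m = (x n (m + 1) - x (n + 1) m) / x (n + 1) m) :
    ∀ n m : ℤ, F n (m + 1) * J n m = F n m * J (n + 1) m := by
  intro n m
  have h21 : (n : ℤ) + 1 + 1 = n + 2 := by ring
  have hE2b := hE2 (n + 1) m
  rw [h21] at hE2b
  have hdE : x (n + 1) (m + 1) * ((x (n + 1) m - x n (m + 1)) * y n m + p - q)
      = x n (m + 1) - x (n + 1) m := by linear_combination hE2 n m
  have heE : x (n + 2) (m + 1) * ((x (n + 2) m - x (n + 1) (m + 1)) * y (n + 1) m + p - q)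
      = x (n + 1) (m + 1) - x (n + 2) m := by linear_combination hE2b
  have hw : y n (m + 1)
      = y (n + 1) m - y n m * ((x (n + 1) m - x n (m + 1)) * y n m + p - q) := by
    linear_combination -hE1 n m
  have h1 : x (n + 1) (m + 1) * (1 + x (n + 2) (m + 1) * y n (m + 1)) * x (n + 1) m ≠ 0 :=
    mul_ne_zero (mul_ne_zero (hx1 n (m + 1)) (hden n (m + 1))) (hx1 n m)
  have h2 : x (n + 1) m * (1 + x (n + 2) m * y n m) * x (n + 2) m ≠ 0 :=
    mul_ne_zero (mul_ne_zero (hx1 n m) (hden n m)) (hx2 n m)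
  rw [hF n (m + 1), hF n m, hJ n m, hJ (n + 1) m, h21, div_mul_div_comm, div_mul_div_comm,
    div_eq_div_iff h1 h2]
  linear_combination
    (x (n + 1) m * x (n + 2) m * x (n + 2) (m + 1) * (1 + x (n + 2) m * y n m)
      - x (n + 1) m * x (n + 2) m * x (n + 1) (m + 1) * x (n + 2) (m + 1) * y n m) * hdE
    - (x (n + 1) m * x (n + 2) m * x (n + 1) (m + 1)) * heE
    + (x (n + 1) m * x (n + 2) m * x (n + 1) (m + 1) * x (n + 2) (m + 1)
      * (x (n + 1) (m + 1) - x (n + 2) m)) * hw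
end

section
/- Let K be a field, p, r ∈ K, and let x, y, φ₁, φ₂ : ℤ → K satisfy for all n (shifts in n: f̃(n) = f(n+1)): φ̃₁ = −φ₁ + x̃·φ₂ and φ̃₂ = y·φ₁ + (r − p − y·x̃)·φ₂, with x̃ and x̃̃ nowhere zero. Then with ε := p − r and B := 1/x̃̃, C := 1/x̃, D := (1 + x̃̃·y)/x̃̃, G := 1/x̃, one has for all n: B·φ̃̃₁ + (ε·C + D)·φ̃₁ + ε·G·φ₁ = 0. -/
/-- Scalar second-order reduction of the `n`-part of the lNLS Lax pair (gauge `γ₁ = 1`):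
from `φ̃₁ = −φ₁ + x̃φ₂`, `φ̃₂ = yφ₁ + (r − p − yx̃)φ₂`, with `ε = p − r`, `B = 1/x̃̃`,
`C = 1/x̃`, `D = (1 + x̃̃y)/x̃̃`, `G = 1/x̃`, one has
`B·φ̃̃₁ + (εC + D)·φ̃₁ + εG·φ₁ = 0`. -/
theorem statement19 {K : Type*} [Field K] (p r : K)
    (x y φ₁ φ₂ : ℤ → K)
    (h1 : ∀ n : ℤ, φ₁ (n + 1) = -φ₁ n + x (n + 1) * φ₂ n)
    (h2 : ∀ n : ℤ, φ₂ (n + 1) = y n * φ₁ n + (r - p - y n * x (n + 1)) * φ₂ n)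
    (hx1 : ∀ n : ℤ, x (n + 1) ≠ 0)
    (hx2 : ∀ n : ℤ, x (n + 2) ≠ 0)
    (ε : K) (hε : ε = p - r)
    (B C D G : ℤ → K)
    (hB : ∀ n, B n = 1 / x (n + 2))
    (hC : ∀ n, C n = 1 / x (n + 1))
    (hD : ∀ n, D n = (1 + x (n + 2) * y n) / x (n + 2))
    (hG : ∀ n, G n = 1 / x (n + 1)) :
    ∀ n : ℤ, B n * φ₁ (n + 2) + (ε * C n + D n) * φ₁ (n + 1) + ε * G n * φ₁ n = 0 := by
  intro n
  have e2 : φ₁ (n + 2) = -φ₁ (n + 1) + x (n + 2) * φ₂ (n + 1) := by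
    have := h1 (n + 1); rwa [show n + 1 + 1 = n + 2 by ring] at this
  have ha := hx1 n
  have hb := hx2 n
  rw [hB, hC, hD, hG, hε, e2, h2 n, h1 n]
  generalize x (n + 1) = a at *
  generalize x (n + 2) = b at *
  field_simp
  ring
end
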